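/- arXiv:0906.3465 — 6 statements merged into one kernel-verified Lean document; each statement's English description precedes it below -/
import Mathlib

section
/- Let X ∈ ℝ^{n×p}, ρ > 0, and let XᵀX = V·diag(λ₁,…,λ_p)·Vᵀ be a spectral decomposition with V ∈ ℝ^{p×p} orthogonal and λ₁ ≥ … ≥ λ_p ≥ 0 (the λ_i are the squared singular values d_i² of X). Then Δ̂ = V·diag(θ₁,…,θ_p)·Vᵀ with θ_i = (λ_i + √(λ_i² + 16nρ))/(2n) is symmetric positive definite and is the unique maximizer, over all symmetric positive definite Δ ∈ ℝ^{p×p}, of the L2-penalized Gaussian log-likelihood ℓ(Δ) = (n/2)·log det(Δ⁻¹) − (1/2)·tr(XᵀX·Δ⁻¹) − ρ·tr(Δ⁻¹·Δ⁻¹). -/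
open Matrix

open Finset

set_option linter.unusedVariables false

lemma myPosDef_conj {P A : Matrix (Fin p) (Fin p) ℝ} (hP : P.PosDef) (hA : IsUnit A) :
    (Aᵀ * P * A).PosDef := by
  have h := hP.conjTranspose_mul_mul_same (Matrix.mulVec_injective_iff_isUnit.2 hA)
  rwa [conjTranspose_eq_transpose_of_trivial] at h

lemma my_log_det_le_trace {B : Matrix (Fin p) (Fin p) ℝ} (hB : B.PosDef) :
    Real.log B.det ≤ B.trace - p := by
  have hH := hB.1
  have hpos : ∀ i, 0 < hH.eigenvalues i := fun i => hB.eigenvalues_pos i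
  have hdet : B.det = ∏ i, hH.eigenvalues i := by simpa using hH.det_eq_prod_eigenvalues
  have htr : B.trace = ∑ i, hH.eigenvalues i := by
    nth_rewrite 1 [hH.spectral_theorem]
    rw [Unitary.conjStarAlgAut_apply, Matrix.trace_mul_cycle]
    rw [show (star (hH.eigenvectorUnitary : Matrix (Fin p) (Fin p) ℝ)) *
        (hH.eigenvectorUnitary : Matrix (Fin p) (Fin p) ℝ) = 1 from
      Matrix.mem_unitaryGroup_iff'.mp hH.eigenvectorUnitary.2, one_mul]
    simp [Matrix.trace_diagonal]
  calc Real.log B.det = ∑ i, Real.log (hH.eigenvalues i) := by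
        rw [hdet, Real.log_prod (fun i _ => (hpos i).ne')]
    _ ≤ ∑ i, (hH.eigenvalues i - 1) :=
        Finset.sum_le_sum fun i _ => Real.log_le_sub_one_of_pos (hpos i)
    _ = B.trace - p := by rw [Finset.sum_sub_distrib, htr]; simp

/-- L₂-penalized Gaussian log-likelihood of the regularized covariance
model: `ℓ(Δ) = (n/2)·log det(Δ⁻¹) − (1/2)·tr(XᵀXΔ⁻¹) − ρ·tr(Δ⁻¹Δ⁻¹)`.
If `XᵀX = V diag(λ) Vᵀ` is a spectral decomposition (V orthogonal, λ the squared
singular values of X, nonincreasing and nonnegative), then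
`Δ̂ = V diag(θ) Vᵀ` with `θᵢ = (λᵢ + √(λᵢ² + 16 n ρ))/(2n)` is symmetric positive
definite and is the unique maximizer of `ℓ` over symmetric positive definite matrices. -/
theorem rcm_l2_unique_maximizer
    (n p : ℕ) (hn : 0 < n) (hp : 0 < p)
    (X : Matrix (Fin n) (Fin p) ℝ) (ρ : ℝ) (hρ : 0 < ρ)
    (V : Matrix (Fin p) (Fin p) ℝ) (hV : V * Vᵀ = 1)
    (lam : Fin p → ℝ)
    (hlam_nonneg : ∀ i, 0 ≤ lam i)
    (hlam_mono : ∀ i j : Fin p, i ≤ j → lam j ≤ lam i)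
    (hspec : Xᵀ * X = V * Matrix.diagonal lam * Vᵀ)
    (θ : Fin p → ℝ)
    (hθ : ∀ i, θ i = (lam i + Real.sqrt ((lam i) ^ 2 + 16 * n * ρ)) / (2 * n))
    (Δhat : Matrix (Fin p) (Fin p) ℝ)
    (hΔhat : Δhat = V * Matrix.diagonal θ * Vᵀ)
    (ℓ : Matrix (Fin p) (Fin p) ℝ → ℝ)
    (hℓ : ∀ Δ : Matrix (Fin p) (Fin p) ℝ,
      ℓ Δ = (n / 2 : ℝ) * Real.log (Δ⁻¹).det
        - (1 / 2 : ℝ) * Matrix.trace (Xᵀ * X * Δ⁻¹)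
        - ρ * Matrix.trace (Δ⁻¹ * Δ⁻¹)) :
    Δhat.PosDef ∧ Δhatᵀ = Δhat ∧
      (∀ Δ : Matrix (Fin p) (Fin p) ℝ, Δ.PosDef → Δᵀ = Δ →
        ℓ Δ ≤ ℓ Δhat ∧ (ℓ Δ = ℓ Δhat → Δ = Δhat)) := by
  have hn' : (0:ℝ) < n := by exact_mod_cast hn
  have hVtV : Vᵀ * V = 1 := mul_eq_one_comm.mp hV
  have hVunit : IsUnit V := ⟨⟨V, Vᵀ, hV, hVtV⟩, rfl⟩
  have hVTunit : IsUnit Vᵀ := ⟨⟨Vᵀ, V, hVtV, hV⟩, rfl⟩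
  have hθpos : ∀ i, 0 < θ i := by
    intro i
    rw [hθ]
    have h1 : 0 < Real.sqrt ((lam i)^2 + 16*n*ρ) := Real.sqrt_pos.mpr (by positivity)
    exact div_pos (by linarith [hlam_nonneg i]) (by linarith)
  set μ : Fin p → ℝ := fun i => (θ i)⁻¹ with hμdef
  have hμpos : ∀ i, 0 < μ i := fun i => inv_pos.mpr (hθpos i)
  have hθμ : ∀ i, θ i * μ i = 1 := fun i => mul_inv_cancel₀ (hθpos i).ne'
  have hkey : ∀ i, (n:ℝ) * θ i ^ 2 = lam i * θ i + 4 * ρ := by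
    intro i
    have hs : Real.sqrt ((lam i)^2 + 16*n*ρ) ^ 2 = (lam i)^2 + 16*n*ρ :=
      Real.sq_sqrt (by positivity)
    have hs2 : Real.sqrt ((lam i)^2 + n*16*ρ) ^ 2 = (lam i)^2 + n*16*ρ :=
      Real.sq_sqrt (by positivity)
    rw [hθ]
    field_simp
    nlinarith [hs, hs2]
  have h1 : ∀ i, (n:ℝ) * θ i = lam i + 4 * ρ * μ i := by
    intro i
    linear_combination μ i * hkey i + (lam i - (n:ℝ) * θ i) * hθμ i
  have h2 : ∀ i, (n:ℝ) = lam i * μ i + 4 * ρ * (μ i)^2 := by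
    intro i
    linear_combination (μ i)^2 * hkey i + (lam i * μ i - (n:ℝ) * θ i * μ i - n) * hθμ i
  -- collapse lemma
  have collapse : ∀ A B : Matrix (Fin p) (Fin p) ℝ,
      (V * A * Vᵀ) * (V * B * Vᵀ) = V * (A * B) * Vᵀ := by
    intro A B
    have h2' : Vᵀ * (V * (B * Vᵀ)) = B * Vᵀ := by rw [← mul_assoc, hVtV, one_mul]
    simp only [mul_assoc, h2']
  have hdetVV : V.det * V.det = 1 := by
    have := congrArg Matrix.det hV
    rwa [Matrix.det_mul, Matrix.det_transpose, Matrix.det_one] at this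
  have hdet_conj : ∀ A : Matrix (Fin p) (Fin p) ℝ, (V * A * Vᵀ).det = A.det := by
    intro A
    rw [Matrix.det_mul, Matrix.det_mul, Matrix.det_transpose]
    linear_combination A.det * hdetVV
  have htrace_conj : ∀ A : Matrix (Fin p) (Fin p) ℝ, (V * A * Vᵀ).trace = A.trace := by
    intro A
    rw [Matrix.trace_mul_cycle, hVtV, one_mul]
  -- Δhat is PosDef and symmetric
  have hDiagθPD : (Matrix.diagonal θ).PosDef := Matrix.PosDef.diagonal hθpos
  have hΔhatPD : Δhat.PosDef := by
    rw [hΔhat, show V = Vᵀᵀ from (transpose_transpose V).symm]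
    exact myPosDef_conj hDiagθPD hVTunit
  have hΔhatT : Δhatᵀ = Δhat := by
    rw [hΔhat]
    simp [Matrix.transpose_mul, Matrix.diagonal_transpose, mul_assoc]
  -- inverse of Δhat
  have hΔhatInv : Δhat⁻¹ = V * Matrix.diagonal μ * Vᵀ := by
    apply Matrix.inv_eq_right_inv
    rw [hΔhat, collapse, Matrix.diagonal_mul_diagonal]
    have : (fun i => θ i * μ i) = fun _ => (1:ℝ) := funext fun i => hθμ i
    rw [this, Matrix.diagonal_one, mul_one, hV]
  -- ℓ in terms of conjugated inverse
  have hℓW : ∀ (Δ' W' : Matrix (Fin p) (Fin p) ℝ), Δ'⁻¹ = V * W' * Vᵀ →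
      ℓ Δ' = (n / 2 : ℝ) * Real.log W'.det
        - (1 / 2 : ℝ) * ∑ i, lam i * W' i i
        - ρ * ∑ i, ∑ j, W' i j * W' j i := by
    intro Δ' W' hinv
    rw [hℓ, hinv, hspec, hdet_conj]
    congr 2
    · rw [collapse, htrace_conj]
      simp [Matrix.trace, Matrix.diag, Matrix.mul_apply, Matrix.diagonal_apply, ite_mul,
        Finset.sum_ite_eq, Finset.mem_univ]
    · rw [collapse, htrace_conj]
      simp [Matrix.trace, Matrix.diag, Matrix.mul_apply]
  -- value at Δhat
  have hℓΔhat : ℓ Δhat = (n / 2 : ℝ) * ∑ i, Real.log (μ i)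
      - (1 / 2 : ℝ) * ∑ i, lam i * μ i - ρ * ∑ i, μ i * μ i := by
    have ha : Real.log (Matrix.diagonal μ).det = ∑ i, Real.log (μ i) := by
      rw [Matrix.det_diagonal, Real.log_prod (fun i _ => (hμpos i).ne')]
    have hb : (∑ i, lam i * Matrix.diagonal μ i i) = ∑ i, lam i * μ i := by
      apply Finset.sum_congr rfl; intro i _; rw [Matrix.diagonal_apply_eq]
    have hc : (∑ i, ∑ j, Matrix.diagonal μ i j * Matrix.diagonal μ j i) = ∑ i, μ i * μ i := by
      apply Finset.sum_congr rfl; intro i _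
      rw [Finset.sum_eq_single i]
      · rw [Matrix.diagonal_apply_eq]
      · intro j _ hji
        rw [Matrix.diagonal_apply_ne' _ hji, zero_mul]
      · intro h; exact absurd (Finset.mem_univ i) h
    rw [hℓW Δhat (Matrix.diagonal μ) hΔhatInv, ha, hb, hc]
  refine ⟨hΔhatPD, hΔhatT, ?_⟩
  intro Δ hΔPD hΔT
  -- set up W
  have hΔinvPD : Δ⁻¹.PosDef := hΔPD.inv
  have hΔinvT : Δ⁻¹ᵀ = Δ⁻¹ := by rw [Matrix.transpose_nonsing_inv, hΔT]
  set W : Matrix (Fin p) (Fin p) ℝ := Vᵀ * Δ⁻¹ * V with hWdef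
  have hWPD : W.PosDef := myPosDef_conj hΔinvPD hVunit
  have hWT : Wᵀ = W := by
    rw [hWdef]
    simp [Matrix.transpose_mul, hΔinvT, mul_assoc]
  have hWsymm : ∀ i j, W j i = W i j := by
    intro i j
    have := congrFun (congrFun hWT i) j
    simpa [Matrix.transpose_apply] using this
  have hΩW : Δ⁻¹ = V * W * Vᵀ := by
    rw [hWdef]
    calc Δ⁻¹ = (V * Vᵀ) * Δ⁻¹ * (V * Vᵀ) := by rw [hV, one_mul, mul_one]
      _ = V * (Vᵀ * Δ⁻¹ * V) * Vᵀ := by simp only [mul_assoc]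
  have hℓΔ := hℓW Δ W hΩW
  -- the log-det inequality
  have hlogdet : Real.log W.det ≤ (∑ i, θ i * W i i) - p + ∑ i, Real.log (μ i) := by
    set D : Matrix (Fin p) (Fin p) ℝ := Matrix.diagonal (fun i => Real.sqrt (θ i)) with hDdef
    have hDPD : D.PosDef := Matrix.PosDef.diagonal (fun i => Real.sqrt_pos.mpr (hθpos i))
    have hDT : Dᵀ = D := Matrix.diagonal_transpose _
    have hBPD : (D * W * D).PosDef := by
      have := myPosDef_conj hWPD hDPD.isUnit
      rwa [hDT] at this
    have hle := my_log_det_le_trace hBPD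
    have hdetB : (D * W * D).det = W.det * ∏ i, θ i := by
      rw [Matrix.det_mul, Matrix.det_mul, hDdef, Matrix.det_diagonal]
      rw [show ((∏ i, Real.sqrt (θ i)) * W.det * ∏ i, Real.sqrt (θ i))
          = W.det * ((∏ i, Real.sqrt (θ i)) * ∏ i, Real.sqrt (θ i)) from by ring,
        ← Finset.prod_mul_distrib,
        Finset.prod_congr rfl (fun i (_ : i ∈ Finset.univ) => Real.mul_self_sqrt (hθpos i).le)]
    have htrB : (D * W * D).trace = ∑ i, θ i * W i i := by
      rw [Matrix.trace]
      apply Finset.sum_congr rfl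
      intro i _
      rw [Matrix.diag]
      rw [hDdef, Matrix.mul_diagonal, Matrix.diagonal_mul]
      rw [mul_comm (Real.sqrt (θ i)) (W i i), mul_assoc, Real.mul_self_sqrt (hθpos i).le]
      ring
    rw [hdetB, htrB] at hle
    have hWdetpos : 0 < W.det := hWPD.det_pos
    have hprodpos : 0 < ∏ i, θ i := Finset.prod_pos (fun i _ => hθpos i)
    rw [Real.log_mul hWdetpos.ne' hprodpos.ne'] at hle
    have hlogprod : Real.log (∏ i, θ i) = - ∑ i, Real.log (μ i) := by
      rw [Real.log_prod (fun i _ => (hθpos i).ne')]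
      rw [← Finset.sum_neg_distrib]
      apply Finset.sum_congr rfl
      intro i _
      rw [hμdef]
      simp [Real.log_inv]
    rw [hlogprod] at hle
    linarith
  -- sum splitting
  have hsplit : ∀ g : Fin p → Fin p → ℝ,
      (∑ i, ∑ j, g i j) = (∑ i, g i i) + ∑ i, ∑ j ∈ Finset.univ.erase i, g i j := by
    intro g
    rw [← Finset.sum_add_distrib]
    exact Finset.sum_congr rfl fun i _ => (Finset.add_sum_erase _ _ (Finset.mem_univ i)).symm
  set O : ℝ := ∑ i, ∑ j ∈ Finset.univ.erase i, (W i j)^2 with hOdef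
  have hQ1 : ∑ i, ∑ j, W i j * W j i = (∑ i, W i i * W i i) + O := by
    rw [hsplit]
    congr 1
    apply Finset.sum_congr rfl; intro i _
    apply Finset.sum_congr rfl; intro j _
    rw [hWsymm i j]; ring
  set P : ℝ := ∑ i, ∑ j, (W i j - Matrix.diagonal μ i j)^2 with hPdef
  have hPsplit : P = (∑ i, (W i i - μ i)^2) + O := by
    rw [hPdef, hsplit]
    congr 1
    · apply Finset.sum_congr rfl; intro i _; rw [Matrix.diagonal_apply_eq]
    · apply Finset.sum_congr rfl; intro i _
      apply Finset.sum_congr rfl; intro j hj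
      rw [Matrix.diagonal_apply_ne _ (Finset.ne_of_mem_erase hj).symm, sub_zero]
  have hPnonneg : 0 ≤ P := by
    rw [hPdef]
    apply Finset.sum_nonneg; intro i _
    apply Finset.sum_nonneg; intro j _
    positivity
  -- scalar identity
  have hscalar : ∀ i, (n/2:ℝ) * (θ i * W i i - 1 + Real.log (μ i))
      - (1/2) * (lam i * W i i) - ρ * (W i i * W i i) + ρ * (W i i - μ i)^2
      = (n/2) * Real.log (μ i) - (1/2) * (lam i * μ i) - ρ * (μ i * μ i) := by
    intro i
    linear_combination (W i i / 2) * h1 i - (1/2) * h2 i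
  have e1 := Finset.sum_congr rfl (fun i (_ : i ∈ Finset.univ) => hscalar i)
  simp only [Finset.sum_add_distrib, Finset.sum_sub_distrib, mul_sub, mul_add, mul_one,
    ← Finset.mul_sum, Finset.sum_const, Finset.card_univ, Fintype.card_fin,
    nsmul_eq_mul] at e1
  -- main chain
  have hexp : ℓ Δ + ρ * P = (n/2:ℝ) * Real.log W.det - (1/2) * ∑ i, lam i * W i i
      - ρ * ∑ i, W i i * W i i + ρ * ∑ i, (W i i - μ i)^2 := by
    rw [hℓΔ, hQ1, hPsplit]; ring
  have hnhalf : (0:ℝ) ≤ (n:ℝ)/2 := by positivity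
  have hlog2 := mul_le_mul_of_nonneg_left hlogdet hnhalf
  have hmain : ℓ Δ + ρ * P ≤ ℓ Δhat := by
    rw [hexp, hℓΔhat]
    linarith [hlog2, e1]
  constructor
  · linarith [hmain, mul_nonneg hρ.le hPnonneg]
  · intro heq
    have hρP : ρ * P ≤ ρ * 0 := by rw [mul_zero]; linarith [hmain, heq]
    have hP0 : P = 0 := le_antisymm (le_of_mul_le_mul_left hρP hρ) hPnonneg
    have hWeq : W = Matrix.diagonal μ := by
      ext i j
      have h3 : ∀ i ∈ Finset.univ, (0:ℝ) ≤ ∑ j, (W i j - Matrix.diagonal μ i j)^2 :=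
        fun i _ => Finset.sum_nonneg fun j _ => sq_nonneg _
      have h4 : (∑ i, ∑ j, (W i j - Matrix.diagonal μ i j)^2) = 0 := by
        rw [← hPdef]; exact hP0
      have h5 := (Finset.sum_eq_zero_iff_of_nonneg h3).mp h4 i (Finset.mem_univ i)
      have h6 := (Finset.sum_eq_zero_iff_of_nonneg (fun j _ => sq_nonneg _)).mp h5 j
        (Finset.mem_univ j)
      have := pow_eq_zero_iff (n := 2) (by norm_num) |>.mp h6
      linarith [this]
    have hinveq : Δ⁻¹ = Δhat⁻¹ := by rw [hΩW, hWeq, hΔhatInv]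
    have hΔdet : IsUnit Δ.det := (hΔPD.det_pos).ne'.isUnit
    have hΔhatdet : IsUnit Δhat.det := (hΔhatPD.det_pos).ne'.isUnit
    calc Δ = Δ⁻¹⁻¹ := (Matrix.nonsing_inv_nonsing_inv Δ hΔdet).symm
      _ = Δhat⁻¹⁻¹ := by rw [hinveq]
      _ = Δhat := Matrix.nonsing_inv_nonsing_inv Δhat hΔhatdet
end

section
/- Let S ∈ ℝ^{p×p} be symmetric positive semidefinite with spectral decomposition S = V·diag(λ₁,…,λ_p)·Vᵀ, V orthogonal, λ_i ≥ 0, and let n ≥ 1 and ρ_c > 0. Then Δ̂ = V·diag(θ₁,…,θ_p)·Vᵀ with θ_i = (λ_i + √(λ_i² + 16nρ_c))/(2n) is the unique maximizer over symmetric positive definite Δ ∈ ℝ^{p×p} of Q(Δ) = (n/2)·log det(Δ⁻¹) − (1/2)·tr(S·Δ⁻¹) − ρ_c·tr(Δ⁻¹·Δ⁻¹); equivalently, Δ̂ is the unique positive definite solution of the stationarity equation Δ − S/n − (4ρ_c/n)·Δ⁻¹ = 0. (Applied with S = XᵀΣ⁻¹X this is the conditional maximization step of the transposable model for fixed Σ;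 applied with the adjusted matrix X̂ᵀΣ⁻¹X̂ + G(Σ⁻¹) it is the CM step of the MCECM imputation algorithm.) -/
open Matrix

section Auxiliary

lemma aux_trace_sq_eq {p : ℕ} (D : Matrix (Fin p) (Fin p) ℝ) (hD : Dᵀ = D) :
    Matrix.trace (D * D) = ∑ i, ∑ j, (D i j)^2 := by
  simp only [Matrix.trace, Matrix.diag, Matrix.mul_apply]
  congr 1; ext i; congr 1; ext j
  rw [show D j i = D i j from congrFun (congrFun hD i) j, sq]

lemma aux_trace_sq_nonneg {p : ℕ} (D : Matrix (Fin p) (Fin p) ℝ) (hD : Dᵀ = D) :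
    0 ≤ Matrix.trace (D * D) := by
  rw [aux_trace_sq_eq D hD]
  exact Finset.sum_nonneg fun i _ => Finset.sum_nonneg fun j _ => sq_nonneg _

lemma aux_eq_zero_of_trace_sq {p : ℕ} {D : Matrix (Fin p) (Fin p) ℝ} (hD : Dᵀ = D)
    (h : Matrix.trace (D * D) ≤ 0) : D = 0 := by
  rw [aux_trace_sq_eq D hD] at h
  have hnonneg : ∀ i ∈ Finset.univ, (0:ℝ) ≤ ∑ j, (D i j)^2 :=
    fun i _ => Finset.sum_nonneg fun j _ => sq_nonneg _
  have h0 : ∑ i, ∑ j, (D i j)^2 = 0 :=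
    le_antisymm h (Finset.sum_nonneg hnonneg)
  ext i j
  have h1 := (Finset.sum_eq_zero_iff_of_nonneg hnonneg).mp h0 i (Finset.mem_univ _)
  have h2 := (Finset.sum_eq_zero_iff_of_nonneg (fun j _ => sq_nonneg (D i j))).mp h1 j
    (Finset.mem_univ _)
  simpa using pow_eq_zero_iff (n := 2) (by norm_num) |>.mp h2

lemma aux_sym_of_posDef {p : ℕ} {M : Matrix (Fin p) (Fin p) ℝ} (hM : M.PosDef) : Mᵀ = M := by
  have := hM.isHermitian
  rwa [Matrix.IsHermitian, Matrix.conjTranspose_eq_transpose_of_trivial] at this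

lemma aux_posDef_conj {p : ℕ} {A U : Matrix (Fin p) (Fin p) ℝ} (hA : A.PosDef)
    (hU : IsUnit U.det) : (U * A * Uᴴ).PosDef := by
  exact hA.mul_mul_conjTranspose_same
    (Matrix.vecMul_injective_iff_isUnit.2 ((Matrix.isUnit_iff_isUnit_det U).2 hU))

lemma aux_logdet_core {p : ℕ} {C : Matrix (Fin p) (Fin p) ℝ} (hC : C.PosDef) :
    Real.log C.det ≤ Matrix.trace C - p := by
  have hH := hC.isHermitian
  have htr : Matrix.trace C = ∑ i, hH.eigenvalues i := by
    simpa using hH.trace_eq_sum_eigenvalues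
  have hdet : C.det = ∏ i, hH.eigenvalues i := by
    simpa using hH.det_eq_prod_eigenvalues
  have hpos : ∀ i, 0 < hH.eigenvalues i := hC.eigenvalues_pos
  rw [hdet, htr, Real.log_prod (fun i _ => (hpos i).ne')]
  calc ∑ i, Real.log (hH.eigenvalues i) ≤ ∑ i, (hH.eigenvalues i - 1) :=
        Finset.sum_le_sum fun i _ => Real.log_le_sub_one_of_pos (hpos i)
    _ = ∑ i, hH.eigenvalues i - p := by rw [Finset.sum_sub_distrib]; simp

open scoped MatrixOrder in
lemma aux_logdet_cmp {p : ℕ} {A B : Matrix (Fin p) (Fin p) ℝ} (hA : A.PosDef) (hB : B.PosDef) :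
    Real.log B.det ≤ Real.log A.det + (Matrix.trace (A⁻¹ * B) - p) := by
  have hAi : (A⁻¹).PosDef := hA.inv
  set R := CFC.sqrt (A⁻¹) with hRdef
  have hR2 : R * R = A⁻¹ := CFC.sqrt_mul_sqrt_self _ hAi.posSemidef.nonneg
  have hRH : Rᴴ = R := (Matrix.nonneg_iff_posSemidef.mp (CFC.sqrt_nonneg _)).isHermitian
  have hdetAi : (0:ℝ) < (A⁻¹).det := hAi.det_pos
  have hRdet : IsUnit R.det := by
    have : R.det * R.det = (A⁻¹).det := by rw [← det_mul, hR2]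
    have : R.det ≠ 0 := by intro h; rw [h, mul_zero] at this; exact hdetAi.ne this
    exact this.isUnit
  have hC : (R * B * R).PosDef := by
    have := aux_posDef_conj hB hRdet
    rwa [hRH] at this
  have hdetC : (R * B * R).det = (A⁻¹).det * B.det := by
    rw [det_mul, det_mul, mul_comm, ← mul_assoc, ← det_mul, hR2]
  have htrC : Matrix.trace (R * B * R) = Matrix.trace (A⁻¹ * B) := by
    rw [Matrix.trace_mul_cycle, hR2]
  have := aux_logdet_core hC
  rw [hdetC, htrC, Real.log_mul hdetAi.ne' hB.det_pos.ne',
    Matrix.det_nonsing_inv, Ring.inverse_eq_inv, Real.log_inv] at this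
  linarith

lemma aux_main_cmp {p n : ℕ} (hn : 1 ≤ n)
    (S : Matrix (Fin p) (Fin p) ℝ) (ρc : ℝ) (hρc : 0 < ρc)
    (Q : Matrix (Fin p) (Fin p) ℝ → ℝ)
    (hQ : ∀ Δ : Matrix (Fin p) (Fin p) ℝ,
      Q Δ = (n / 2 : ℝ) * Real.log (Δ⁻¹).det
        - (1 / 2 : ℝ) * Matrix.trace (S * Δ⁻¹)
        - ρc * Matrix.trace (Δ⁻¹ * Δ⁻¹))
    (Δ₀ : Matrix (Fin p) (Fin p) ℝ) (h₀ : Δ₀.PosDef)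
    (hst : (n:ℝ) • Δ₀ - S - (4*ρc) • Δ₀⁻¹ = 0)
    (Δ : Matrix (Fin p) (Fin p) ℝ) (hΔ : Δ.PosDef) :
    Q Δ ≤ Q Δ₀ ∧ (Q Δ = Q Δ₀ → Δ = Δ₀) := by
  have hdet₀ : IsUnit Δ₀.det := Matrix.isUnit_iff_isUnit_det _ |>.mp h₀.isUnit
  have hdet : IsUnit Δ.det := Matrix.isUnit_iff_isUnit_det _ |>.mp hΔ.isUnit
  set Ω := Δ⁻¹ with hΩdef
  set Ω₀ := Δ₀⁻¹ with hΩ₀def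
  have hΩ : Ω.PosDef := hΔ.inv
  have hΩ₀ : Ω₀.PosDef := h₀.inv
  set D := Ω - Ω₀ with hDdef
  have hΩeq : Ω = Ω₀ + D := by rw [hDdef]; abel
  have hDsym : Dᵀ = D := by
    rw [hDdef, Matrix.transpose_sub, aux_sym_of_posDef hΩ, aux_sym_of_posDef hΩ₀]
  have hΩ₀inv : Ω₀⁻¹ = Δ₀ := Matrix.nonsing_inv_nonsing_inv _ hdet₀
  have hlog : Real.log Ω.det ≤ Real.log Ω₀.det + (Matrix.trace (Δ₀ * Ω) - p) := by
    have := aux_logdet_cmp hΩ₀ hΩ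
    rwa [hΩ₀inv] at this
  have htr1 : Matrix.trace (Δ₀ * Ω₀) = p := by
    rw [hΩ₀def, Matrix.mul_nonsing_inv _ hdet₀, Matrix.trace_one]
    simp
  have key5 : Matrix.trace (Δ₀ * Ω) = Matrix.trace (Δ₀ * Ω₀) + Matrix.trace (Δ₀ * D) := by
    rw [hΩeq, Matrix.mul_add, Matrix.trace_add]
  have key1 : Matrix.trace (Ω * Ω)
      = Matrix.trace (Ω₀ * Ω₀) + 2 * Matrix.trace (Ω₀ * D) + Matrix.trace (D * D) := by
    rw [hΩeq, Matrix.add_mul, Matrix.mul_add, Matrix.mul_add, Matrix.trace_add,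
      Matrix.trace_add, Matrix.trace_add, Matrix.trace_mul_comm D Ω₀]
    ring
  have key2 : Matrix.trace (S * Ω) = Matrix.trace (S * Ω₀) + Matrix.trace (S * D) := by
    rw [hΩeq, Matrix.mul_add, Matrix.trace_add]
  have key3 : (n:ℝ) • Δ₀ = S + (4*ρc) • Ω₀ := by
    rw [← sub_eq_zero]
    rw [show (n:ℝ) • Δ₀ - (S + (4*ρc) • Ω₀) = (n:ℝ) • Δ₀ - S - (4*ρc) • Ω₀ by abel]
    exact hst
  have key4 : (n:ℝ) * Matrix.trace (Δ₀ * D)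
      = Matrix.trace (S * D) + 4*ρc * Matrix.trace (Ω₀ * D) := by
    have := congrArg (fun M => Matrix.trace (M * D)) key3
    simpa [Matrix.add_mul, Matrix.smul_mul, Matrix.trace_add, Matrix.trace_smul,
      smul_eq_mul, mul_assoc] using this
  have hlog' : Real.log Ω.det ≤ Real.log Ω₀.det + Matrix.trace (Δ₀ * D) := by
    linarith [hlog, key5, htr1]
  have hmul : (n:ℝ)/2 * Real.log Ω.det
      ≤ (n:ℝ)/2 * Real.log Ω₀.det + (n:ℝ)/2 * Matrix.trace (Δ₀ * D) := by
    have h2 := mul_le_mul_of_nonneg_left hlog' (show (0:ℝ) ≤ (n:ℝ)/2 by positivity)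
    rw [mul_add] at h2
    exact h2
  have hbound : Q Δ ≤ Q Δ₀ - ρc * Matrix.trace (D * D) := by
    rw [hQ Δ, hQ Δ₀, ← hΩdef, ← hΩ₀def]
    nlinarith [hmul, key1, key2, key4]
  have htrD2 : 0 ≤ Matrix.trace (D * D) := aux_trace_sq_nonneg D hDsym
  constructor
  · nlinarith [hbound, htrD2]
  · intro heq
    have hD0 : D = 0 := by
      apply aux_eq_zero_of_trace_sq hDsym
      nlinarith [hbound]
    have : Ω = Ω₀ := by rwa [sub_eq_zero] at hD0
    calc Δ = Ω⁻¹ := (Matrix.nonsing_inv_nonsing_inv _ hdet).symm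
      _ = Ω₀⁻¹ := by rw [this]
      _ = Δ₀ := hΩ₀inv

end Auxiliary

/-- For `S` symmetric positive semidefinite with spectral decomposition
`S = V diag(λ) Vᵀ`, `n ≥ 1` and `ρ_c > 0`, the matrix `Δ̂ = V diag(θ) Vᵀ` with
`θᵢ = (λᵢ + √(λᵢ² + 16 n ρ_c))/(2n)` is the unique maximizer over symmetric positive
definite `Δ` of `Q(Δ) = (n/2)·log det(Δ⁻¹) − (1/2)·tr(SΔ⁻¹) − ρ_c·tr(Δ⁻¹Δ⁻¹)`;
equivalently, `Δ̂` is the unique positive definite solution of the stationarity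
equation `Δ − S/n − (4ρ_c/n)·Δ⁻¹ = 0`. -/
theorem trcm_cm_step_unique_maximizer
    (p n : ℕ) (hn : 1 ≤ n)
    (S : Matrix (Fin p) (Fin p) ℝ) (hS : S.PosSemidef)
    (ρc : ℝ) (hρc : 0 < ρc)
    (V : Matrix (Fin p) (Fin p) ℝ) (hV : V * Vᵀ = 1)
    (lam : Fin p → ℝ) (hlam_nonneg : ∀ i, 0 ≤ lam i)
    (hspec : S = V * Matrix.diagonal lam * Vᵀ)
    (θ : Fin p → ℝ)
    (hθ : ∀ i, θ i = (lam i + Real.sqrt ((lam i) ^ 2 + 16 * n * ρc)) / (2 * n))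
    (Δhat : Matrix (Fin p) (Fin p) ℝ)
    (hΔhat : Δhat = V * Matrix.diagonal θ * Vᵀ)
    (Q : Matrix (Fin p) (Fin p) ℝ → ℝ)
    (hQ : ∀ Δ : Matrix (Fin p) (Fin p) ℝ,
      Q Δ = (n / 2 : ℝ) * Real.log (Δ⁻¹).det
        - (1 / 2 : ℝ) * Matrix.trace (S * Δ⁻¹)
        - ρc * Matrix.trace (Δ⁻¹ * Δ⁻¹)) :
    Δhat.PosDef ∧ Δhatᵀ = Δhat ∧
      (∀ Δ : Matrix (Fin p) (Fin p) ℝ, Δ.PosDef → Δᵀ = Δ →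
        Q Δ ≤ Q Δhat ∧ (Q Δ = Q Δhat → Δ = Δhat)) ∧
      (∀ Δ : Matrix (Fin p) (Fin p) ℝ, Δ.PosDef → Δᵀ = Δ →
        (Δ - (1 / (n : ℝ)) • S - (4 * ρc / (n : ℝ)) • Δ⁻¹ = 0 ↔ Δ = Δhat)) := by
  have hnR : (0:ℝ) < n := by exact_mod_cast hn
  -- θ positive
  have hθpos : ∀ i, 0 < θ i := by
    intro i
    rw [hθ i]
    have hs : lam i < Real.sqrt ((lam i)^2 + 16 * n * ρc) := by
      have : Real.sqrt ((lam i)^2) < Real.sqrt ((lam i)^2 + 16 * n * ρc) :=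
        Real.sqrt_lt_sqrt (sq_nonneg _) (lt_add_of_pos_right _ (by positivity))
      rwa [Real.sqrt_sq (hlam_nonneg i)] at this
    have : 0 < lam i + Real.sqrt ((lam i)^2 + 16 * n * ρc) := by
      linarith [hlam_nonneg i]
    positivity
  -- quadratic equation
  have hquad : ∀ i, (n:ℝ) * θ i ^ 2 - lam i * θ i - 4 * ρc = 0 := by
    intro i
    have hs2 : Real.sqrt ((lam i)^2 + 16 * n * ρc) ^ 2 = (lam i)^2 + 16 * n * ρc :=
      Real.sq_sqrt (by positivity)
    rw [hθ i]
    field_simp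
    ring_nf at hs2 ⊢
    nlinarith [hs2]
  -- stationarity scalar
  have hstat : ∀ i, (n:ℝ) * θ i - lam i - 4 * ρc * (θ i)⁻¹ = 0 := by
    intro i
    have hne := (hθpos i).ne'
    have h := hquad i
    field_simp
    nlinarith [h]
  -- VᵀV = 1
  have hVtV : Vᵀ * V = 1 := mul_eq_one_comm.mp hV
  -- det V unit
  have hVdet : IsUnit V.det := by
    have : V.det * V.det = 1 := by
      have := congrArg Matrix.det hV
      rwa [Matrix.det_mul, Matrix.det_transpose, Matrix.det_one] at this
    exact IsUnit.of_mul_eq_one _ this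
  -- Δ̂ PosDef
  have hDiagPD : (Matrix.diagonal θ).PosDef := Matrix.posDef_diagonal_iff.mpr hθpos
  have hΔPD : Δhat.PosDef := by
    rw [hΔhat]
    have := aux_posDef_conj hDiagPD hVdet
    rwa [Matrix.conjTranspose_eq_transpose_of_trivial] at this
  -- symmetric
  have hΔsym : Δhatᵀ = Δhat := by
    rw [hΔhat, Matrix.transpose_mul, Matrix.transpose_mul, Matrix.transpose_transpose,
      Matrix.diagonal_transpose, Matrix.mul_assoc]
  -- inverse
  have hΔinv : Δhat⁻¹ = V * Matrix.diagonal (fun i => (θ i)⁻¹) * Vᵀ := by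
    rw [hΔhat]
    apply Matrix.inv_eq_right_inv
    calc V * Matrix.diagonal θ * Vᵀ * (V * Matrix.diagonal (fun i => (θ i)⁻¹) * Vᵀ)
        = V * (Matrix.diagonal θ * ((Vᵀ * V) * Matrix.diagonal (fun i => (θ i)⁻¹))) * Vᵀ := by
          simp only [Matrix.mul_assoc]
      _ = 1 := by
          rw [hVtV, Matrix.one_mul, Matrix.diagonal_mul_diagonal]
          rw [show (fun i => θ i * (θ i)⁻¹) = fun _ => (1:ℝ) from
            funext fun i => mul_inv_cancel₀ (hθpos i).ne']
          rw [Matrix.diagonal_one, Matrix.mul_one, hV]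
  -- stationarity matrix
  have hstatM : (n:ℝ) • Δhat - S - (4*ρc) • Δhat⁻¹ = 0 := by
    rw [hΔinv, hΔhat, hspec]
    have hfold : (n:ℝ) • (V * Matrix.diagonal θ * Vᵀ) - (V * Matrix.diagonal lam * Vᵀ)
        - (4*ρc) • (V * Matrix.diagonal (fun i => (θ i)⁻¹) * Vᵀ)
        = V * ((n:ℝ) • Matrix.diagonal θ - Matrix.diagonal lam
            - (4*ρc) • Matrix.diagonal (fun i => (θ i)⁻¹)) * Vᵀ := by
      simp only [Matrix.mul_sub, Matrix.sub_mul, Matrix.mul_smul, Matrix.smul_mul]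
    rw [hfold]
    have hz : (n:ℝ) • Matrix.diagonal θ - Matrix.diagonal lam
        - (4*ρc) • Matrix.diagonal (fun i => (θ i)⁻¹) = 0 := by
      ext i j
      rcases eq_or_ne i j with rfl | h
      · simp only [Matrix.sub_apply, Matrix.smul_apply, Matrix.diagonal_apply_eq,
          smul_eq_mul, Matrix.zero_apply]
        linear_combination hstat i
      · simp [Matrix.diagonal_apply_ne _ h]
    rw [hz, Matrix.mul_zero, Matrix.zero_mul]
  -- main maximizer statement
  have hmax : ∀ Δ : Matrix (Fin p) (Fin p) ℝ, Δ.PosDef →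
      Q Δ ≤ Q Δhat ∧ (Q Δ = Q Δhat → Δ = Δhat) :=
    fun Δ hΔ => aux_main_cmp hn S ρc hρc Q hQ Δhat hΔPD hstatM Δ hΔ
  refine ⟨hΔPD, hΔsym, fun Δ hΔ _ => hmax Δ hΔ, fun Δ hΔ _ => ?_⟩
  constructor
  · intro h
    -- scale stationarity up by n
    have hstΔ : (n:ℝ) • Δ - S - (4*ρc) • Δ⁻¹ = 0 := by
      have hsc := congrArg (fun M : Matrix (Fin p) (Fin p) ℝ => (n:ℝ) • M) h
      simp only [smul_sub, smul_smul, smul_zero] at hsc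
      rw [show (n:ℝ) * (1/(n:ℝ)) = 1 by field_simp, show (n:ℝ) * (4*ρc/(n:ℝ)) = 4*ρc by
        field_simp, one_smul] at hsc
      exact hsc
    have h1 := aux_main_cmp hn S ρc hρc Q hQ Δ hΔ hstΔ Δhat hΔPD
    have h2 := hmax Δ hΔ
    exact h2.2 (le_antisymm h2.1 h1.1)
  · intro h
    subst h
    have hsc := congrArg (fun M : Matrix (Fin p) (Fin p) ℝ => (1/(n:ℝ)) • M) hstatM
    simp only [smul_sub, smul_smul, smul_zero] at hsc
    rw [show (1/(n:ℝ)) * (n:ℝ) = 1 by field_simp, show (1/(n:ℝ)) * (4*ρc) = 4*ρc/(n:ℝ) by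
      ring, one_smul] at hsc
    exact hsc
end

section
/- Let X ∈ ℝ^{n×p}, ρ_r, ρ_c > 0, and consider the L2:L2-penalized transposable log-likelihood ℓ(Σ,Δ). Starting from a symmetric positive definite Σ⁽⁰⁾ ∈ ℝ^{n×n}, define the block coordinate-wise maximization iterates Δ⁽ᵏ⁺¹⁾ = argmax over symmetric positive definite Δ of ℓ(Σ⁽ᵏ⁾, Δ) and Σ⁽ᵏ⁺¹⁾ = argmax over symmetric positive definite Σ of ℓ(Σ, Δ⁽ᵏ⁺¹⁾) (both argmaxes exist and are unique). Then the sequence ℓ(Σ⁽ᵏ⁾, Δ⁽ᵏ⁾) is nondecreasing in k, and every accumulation point (Σ̄, Δ̄) of the iterates consisting of positive definite matrices is a stationary point of ℓ, i.e., satisfies p·Σ̄ = X·Δ̄⁻¹·Xᵀ + 4ρ_r·Σ̄⁻¹ and n·Δ̄ = Xᵀ·Σ̄⁻¹·X + 4ρ_c·Δ̄⁻¹. -/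
open Matrix Filter Topology

lemma trace_mul_single {m : ℕ} (M : Matrix (Fin m) (Fin m) ℝ) (i j : Fin m) :
    (M * Matrix.single i j (1:ℝ)).trace = M j i := by
  simp only [Matrix.trace, Matrix.diag, Matrix.mul_apply, Matrix.single, Matrix.of_apply]
  rw [Finset.sum_comm]
  rw [Finset.sum_eq_single i]
  · rw [Finset.sum_eq_single j] <;> simp +contextual [eq_comm]
  · intro b _ hb
    apply Finset.sum_eq_zero
    intro k _
    rw [if_neg (fun h : i = b ∧ j = k => hb h.1.symm), mul_zero]
  · simp


lemma coercive {m : ℕ} {Ψ : Matrix (Fin m) (Fin m) ℝ} (hΨ : Ψ.PosDef) :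
    ∃ ε > 0, ∀ x : Fin m → ℝ, ε * (x ⬝ᵥ x) ≤ x ⬝ᵥ (Ψ *ᵥ x) := by
  rcases isEmpty_or_nonempty (Fin m) with hm | hm
  · exact ⟨1, one_pos, fun x => by simp [dotProduct]⟩
  · set V := EuclideanSpace ℝ (Fin m)
    let e := WithLp.equiv 2 (Fin m → ℝ)
    let f : V → ℝ := fun x => (e x) ⬝ᵥ (Ψ *ᵥ (e x))
    have hdot : ∀ y : V, e y ⬝ᵥ e y = ‖y‖ ^ 2 := by
      intro y
      have : ‖y‖ = Real.sqrt (∑ i, ‖y i‖ ^ 2) := EuclideanSpace.norm_eq y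
      rw [this, Real.sq_sqrt (by positivity)]
      simp [dotProduct, e, sq]
    have hf : Continuous f := by
      have h : Continuous fun y : Fin m → ℝ => y ⬝ᵥ (Ψ *ᵥ y) :=
        continuous_id.dotProduct (continuous_const.matrix_mulVec continuous_id)
      exact h.comp (PiLp.continuous_ofLp 2 _)
    obtain ⟨u, hu_mem, hmin'⟩ := (isCompact_sphere (0:V) 1).exists_isMinOn
      (NormedSpace.sphere_nonempty.mpr zero_le_one) hf.continuousOn
    have hu_norm : ‖u‖ = 1 := mem_sphere_zero_iff_norm.mp hu_mem
    have hu0 : e u ≠ 0 := by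
      intro h
      have : u = 0 := by
        apply (WithLp.equiv 2 (Fin m → ℝ)).injective
        rw [h]; rfl
      simp [this] at hu_norm
    have hε : 0 < f u := by
      have := hΨ.dotProduct_mulVec_pos hu0
      simpa [star_trivial] using this
    refine ⟨f u, hε, fun x => ?_⟩
    by_cases hx : x = 0
    · simp [hx]
    · set y : V := e.symm x with hy
      have hxy : e y = x := e.apply_symm_apply x
      have hy0 : y ≠ 0 := by
        intro h
        apply hx
        rw [← hxy, h]
        simp [e]
      have hr : (0:ℝ) < ‖y‖ := norm_pos_iff.mpr hy0
      set u' : V := ‖y‖⁻¹ • y with hu'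
      have hu'_norm : ‖u'‖ = 1 := by
        rw [hu', norm_smul, norm_inv, norm_norm, inv_mul_cancel₀ hr.ne']
      have h1 : f u ≤ f u' := hmin' (mem_sphere_zero_iff_norm.mpr hu'_norm)
      have heu' : e u' = ‖y‖⁻¹ • x := by
        rw [hu', ← hxy]
        rfl
      have hfu' : f u' = ‖y‖⁻¹ * (‖y‖⁻¹ * (x ⬝ᵥ (Ψ *ᵥ x))) := by
        simp [f, heu', smul_dotProduct, dotProduct_smul, Matrix.mulVec_smul, smul_eq_mul]
      have hxx : x ⬝ᵥ x = ‖y‖ ^ 2 := by rw [← hxy, hdot]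
      rw [hxx]
      rw [hfu'] at h1
      have h2 := mul_le_mul_of_nonneg_right h1 (sq_nonneg ‖y‖)
      calc f u * ‖y‖ ^ 2 ≤ ‖y‖⁻¹ * (‖y‖⁻¹ * (x ⬝ᵥ (Ψ *ᵥ x))) * ‖y‖ ^ 2 := h2
        _ = ‖y‖⁻¹ * ‖y‖ * (‖y‖⁻¹ * ‖y‖) * (x ⬝ᵥ (Ψ *ᵥ x)) := by ring
        _ = x ⬝ᵥ (Ψ *ᵥ x) := by rw [inv_mul_cancel₀ hr.ne']; ring


lemma quad_bound {m : ℕ} (E : Matrix (Fin m) (Fin m) ℝ) :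
    ∃ C ≥ 0, ∀ x : Fin m → ℝ, |x ⬝ᵥ (E *ᵥ x)| ≤ C * (x ⬝ᵥ x) := by
  refine ⟨∑ i, ∑ j, |E i j|, by positivity, fun x => ?_⟩
  have hxx : ∀ k, x k * x k ≤ x ⬝ᵥ x := fun k =>
    Finset.single_le_sum (f := fun i => x i * x i) (fun i _ => mul_self_nonneg _)
      (Finset.mem_univ k)
  have habs : ∀ i j, |x i| * |x j| ≤ x ⬝ᵥ x := by
    intro i j
    nlinarith [hxx i, hxx j, sq_nonneg (|x i| - |x j|), sq_abs (x i), sq_abs (x j)]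
  calc |x ⬝ᵥ (E *ᵥ x)| = |∑ i, ∑ j, x i * (E i j * x j)| := by
        simp [dotProduct, Matrix.mulVec, Finset.mul_sum]
    _ ≤ ∑ i, |∑ j, x i * (E i j * x j)| := Finset.abs_sum_le_sum_abs _ _
    _ ≤ ∑ i, ∑ j, |x i * (E i j * x j)| :=
        Finset.sum_le_sum fun i _ => Finset.abs_sum_le_sum_abs _ _
    _ ≤ ∑ i, ∑ j, |E i j| * (x ⬝ᵥ x) := by
        refine Finset.sum_le_sum fun i _ => Finset.sum_le_sum fun j _ => ?_
        rw [abs_mul, abs_mul]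
        calc |x i| * (|E i j| * |x j|) = |E i j| * (|x i| * |x j|) := by ring
          _ ≤ |E i j| * (x ⬝ᵥ x) := mul_le_mul_of_nonneg_left (habs i j) (abs_nonneg _)
    _ = (∑ i, ∑ j, |E i j|) * (x ⬝ᵥ x) := by rw [Finset.sum_mul]; simp [Finset.sum_mul]

lemma eventually_posDef {m : ℕ} {Ψ E : Matrix (Fin m) (Fin m) ℝ} (hΨ : Ψ.PosDef)
    (hE : E.IsHermitian) : ∀ᶠ t : ℝ in 𝓝 0, (Ψ + t • E).PosDef := by
  obtain ⟨ε, hε, hco⟩ := coercive hΨ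
  obtain ⟨C, hC0, hC⟩ := quad_bound E
  have hmem : Set.Ioo (-(ε/(C+1))) (ε/(C+1)) ∈ 𝓝 (0:ℝ) :=
    Ioo_mem_nhds (neg_lt_zero.mpr (by positivity)) (by positivity)
  filter_upwards [hmem] with t ht
  have htabs : |t| < ε / (C+1) := abs_lt.mpr ⟨ht.1, ht.2⟩
  refine Matrix.PosDef.of_dotProduct_mulVec_pos ?_ ?_
  · simp only [Matrix.IsHermitian, conjTranspose_add, conjTranspose_smul, hΨ.1.eq, hE.eq,
      star_trivial]
  · intro x hx
    rw [star_trivial]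
    have hq : x ⬝ᵥ ((Ψ + t • E) *ᵥ x) = x ⬝ᵥ (Ψ *ᵥ x) + t * (x ⬝ᵥ (E *ᵥ x)) := by
      simp [Matrix.add_mulVec, Matrix.smul_mulVec, dotProduct_add, dotProduct_smul,
        smul_eq_mul]
    have hxx : (0:ℝ) < x ⬝ᵥ x := by
      rcases lt_or_eq_of_le (Finset.sum_nonneg fun i _ => mul_self_nonneg (x i) :
        (0:ℝ) ≤ x ⬝ᵥ x) with h | h
      · exact h
      · exact absurd (dotProduct_self_eq_zero.mp h.symm) hx
    have h1 : ε * (x ⬝ᵥ x) ≤ x ⬝ᵥ (Ψ *ᵥ x) := hco x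
    have h2 : |x ⬝ᵥ (E *ᵥ x)| ≤ C * (x ⬝ᵥ x) := hC x
    have h3 : t * (x ⬝ᵥ (E *ᵥ x)) ≥ -(|t| * (C * (x ⬝ᵥ x))) := by
      have := abs_mul t (x ⬝ᵥ (E *ᵥ x))
      have h4 : |t * (x ⬝ᵥ (E *ᵥ x))| ≤ |t| * (C * (x ⬝ᵥ x)) := by
        rw [this]
        exact mul_le_mul_of_nonneg_left h2 (abs_nonneg t)
      linarith [neg_abs_le (t * (x ⬝ᵥ (E *ᵥ x)))]
    have h5 : |t| * (C * (x ⬝ᵥ x)) < ε * (x ⬝ᵥ x) := by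
      have hlt : |t| * (C + 1) < ε := by
        rw [← lt_div_iff₀ (by positivity : (0:ℝ) < C + 1)]
        exact htabs
      nlinarith [abs_nonneg t]
    rw [hq]
    nlinarith

lemma hasDerivAt_det_perturb {m : ℕ} (Ψ E : Matrix (Fin m) (Fin m) ℝ) (hΨ : IsUnit Ψ.det) :
    HasDerivAt (fun t : ℝ => (Ψ + t • E).det) (Ψ.det * (Ψ⁻¹ * E).trace) 0 := by
  set M := Ψ⁻¹ * E with hM
  set q : Polynomial ℝ :=
    ((1 + (Polynomial.X : Polynomial ℝ) • M.map Polynomial.C).det).divX.divX with hq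
  have key : ∀ t : ℝ, (Ψ + t • E).det
      = Ψ.det * (1 + M.trace * t + q.eval t * t ^ 2) := by
    intro t
    have hfac : Ψ + t • E = Ψ * (1 + t • M) := by
      rw [mul_add, mul_one, Matrix.mul_smul, hM, ← Matrix.mul_assoc,
        Matrix.mul_nonsing_inv _ hΨ, Matrix.one_mul]
    rw [hfac, det_mul, Matrix.det_one_add_smul t M]
  have hg : HasDerivAt (fun t : ℝ => Ψ.det * (1 + M.trace * t + q.eval t * t ^ 2))
      (Ψ.det * M.trace) 0 := by
    have h1 : HasDerivAt (fun t : ℝ => 1 + M.trace * t + q.eval t * t ^ 2) M.trace 0 := by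
      have ha : HasDerivAt (fun t : ℝ => 1 + M.trace * t) M.trace 0 := by
        exact ((hasDerivAt_const (0:ℝ) (1:ℝ)).add ((hasDerivAt_id (0:ℝ)).const_mul M.trace)).congr_deriv (by simp)
      have hb : HasDerivAt (fun t : ℝ => q.eval t * t ^ 2) 0 0 := by
        have := (q.hasDerivAt (0:ℝ)).mul (hasDerivAt_pow 2 (0:ℝ))
        exact this.congr_deriv (by simp)
      exact (ha.add hb).congr_deriv (by simp)
    simpa using h1.const_mul Ψ.det
  exact hg.congr_of_eventuallyEq (Filter.Eventually.of_forall key)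

lemma hermitian_entry {m : ℕ} {A : Matrix (Fin m) (Fin m) ℝ} (hA : Aᵀ = A) (i j : Fin m) :
    A j i = A i j := by
  conv_lhs => rw [← hA]
  rfl

lemma first_order {m : ℕ} (α c : ℝ) (hc : 0 < c) (A Ψ : Matrix (Fin m) (Fin m) ℝ)
    (hA : Aᵀ = A) (hΨ : Ψ.PosDef)
    (hmax : ∀ Q : Matrix (Fin m) (Fin m) ℝ, Q.PosDef →
      α * Real.log Q.det - (1/2 : ℝ) * (A * Q).trace - c * (Q * Q).trace ≤
      α * Real.log Ψ.det - (1/2 : ℝ) * (A * Ψ).trace - c * (Ψ * Ψ).trace) :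
    (2*α) • Ψ⁻¹ = A + (4*c) • Ψ := by
  have hdet : IsUnit Ψ.det := isUnit_iff_ne_zero.mpr hΨ.det_pos.ne'
  have hsymmΨ : Ψᵀ = Ψ := by
    rw [← Matrix.conjTranspose_eq_transpose_of_trivial]; exact hΨ.1
  have hsymmInv : (Ψ⁻¹)ᵀ = Ψ⁻¹ := by
    rw [← Matrix.conjTranspose_eq_transpose_of_trivial]; exact hΨ.inv.1
  ext i j
  set E : Matrix (Fin m) (Fin m) ℝ :=
    single i j (1:ℝ) + single j i (1:ℝ) with hE
  have hstd : ∀ a b : Fin m, (single a b (1:ℝ))ᵀ = single b a (1:ℝ) := by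
    intro a b
    ext u v
    simp [Matrix.transpose_apply, Matrix.single, and_comm]
  have hEt : Eᵀ = E := by
    rw [hE, Matrix.transpose_add, hstd, hstd, add_comm]
  have hEherm : E.IsHermitian := by
    rw [Matrix.IsHermitian, Matrix.conjTranspose_eq_transpose_of_trivial, hEt]
  set φ : ℝ → ℝ := fun t => α * Real.log (Ψ + t • E).det
      - (1/2 : ℝ) * (A * (Ψ + t • E)).trace - c * ((Ψ + t • E) * (Ψ + t • E)).trace with hφ
  have hmax0 : IsLocalMax φ 0 := by
    filter_upwards [eventually_posDef hΨ hEherm] with t ht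
    have h := hmax _ ht
    simpa [hφ] using h
  have hlog : HasDerivAt (fun t : ℝ => Real.log (Ψ + t • E).det) ((Ψ⁻¹ * E).trace) 0 := by
    have hne : (Ψ + (0:ℝ) • E).det ≠ 0 := by simpa using hΨ.det_pos.ne'
    have h := (hasDerivAt_det_perturb Ψ E hdet).log hne
    have h0 : (Ψ + (0:ℝ) • E).det = Ψ.det := by simp
    rw [h0] at h
    rwa [mul_div_cancel_left₀ _ hΨ.det_pos.ne'] at h
  have htr1 : HasDerivAt (fun t : ℝ => (A * (Ψ + t • E)).trace) ((A * E).trace) 0 := by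
    have hfun : ∀ t : ℝ, (A * (Ψ + t • E)).trace = (A * Ψ).trace + t * (A * E).trace := by
      intro t
      rw [mul_add, Matrix.mul_smul, trace_add, trace_smul, smul_eq_mul]
    have hg : HasDerivAt (fun t : ℝ => (A * Ψ).trace + t * (A * E).trace) ((A * E).trace) 0 := by
      exact ((hasDerivAt_const (0:ℝ) ((A * Ψ).trace)).add
        ((hasDerivAt_id (0:ℝ)).mul_const ((A * E).trace))).congr_deriv (by simp)
    exact hg.congr_of_eventuallyEq (Filter.Eventually.of_forall hfun)
  have htr2 : HasDerivAt (fun t : ℝ => ((Ψ + t • E) * (Ψ + t • E)).trace)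
      (2 * (Ψ * E).trace) 0 := by
    have hfun : ∀ t : ℝ, ((Ψ + t • E) * (Ψ + t • E)).trace
        = (Ψ * Ψ).trace + t * (2 * (Ψ * E).trace) + t ^ 2 * (E * E).trace := by
      intro t
      have hexp : (Ψ + t • E) * (Ψ + t • E)
          = Ψ * Ψ + t • (Ψ * E) + t • (E * Ψ) + (t * t) • (E * E) := by
        simp only [add_mul, mul_add, Matrix.smul_mul, Matrix.mul_smul, smul_smul]
        abel
      rw [hexp, trace_add, trace_add, trace_add, trace_smul, trace_smul, trace_smul,
        trace_mul_comm E Ψ]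
      simp only [smul_eq_mul]
      ring
    have hg : HasDerivAt (fun t : ℝ => (Ψ * Ψ).trace + t * (2 * (Ψ * E).trace)
        + t ^ 2 * (E * E).trace) (2 * (Ψ * E).trace) 0 := by
      have ha : HasDerivAt (fun t : ℝ => (Ψ * Ψ).trace + t * (2 * (Ψ * E).trace))
          (2 * (Ψ * E).trace) 0 := by
        exact ((hasDerivAt_const (0:ℝ) ((Ψ * Ψ).trace)).add
          ((hasDerivAt_id (0:ℝ)).mul_const (2 * (Ψ * E).trace))).congr_deriv (by simp)
      have hb : HasDerivAt (fun t : ℝ => t ^ 2 * (E * E).trace) 0 0 := by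
        simpa using (hasDerivAt_pow 2 (0:ℝ)).mul_const ((E * E).trace)
      exact (ha.add hb).congr_deriv (by simp)
    exact hg.congr_of_eventuallyEq (Filter.Eventually.of_forall hfun)
  have hder : HasDerivAt φ
      (α * (Ψ⁻¹ * E).trace - (1/2 : ℝ) * (A * E).trace - c * (2 * (Ψ * E).trace)) 0 :=
    ((hlog.const_mul α).sub (htr1.const_mul (1/2 : ℝ))).sub (htr2.const_mul c)
  have hzero := hmax0.hasDerivAt_eq_zero hder
  have htrE : ∀ M : Matrix (Fin m) (Fin m) ℝ, (M * E).trace = M j i + M i j := by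
    intro M
    rw [hE, mul_add, trace_add, _root_.trace_mul_single, _root_.trace_mul_single]
  rw [htrE, htrE, htrE] at hzero
  have e1 : Ψ⁻¹ j i = Ψ⁻¹ i j := hermitian_entry hsymmInv i j
  have e2 : A j i = A i j := hermitian_entry hA i j
  have e3 : Ψ j i = Ψ i j := hermitian_entry hsymmΨ i j
  rw [e1, e2, e3] at hzero
  show (2*α) * Ψ⁻¹ i j = A i j + (4*c) * Ψ i j
  linarith
/-- Block coordinate-wise maximization of the L₂:L₂-penalized
transposable log-likelihood `ℓ(Σ,Δ)`: starting from a positive definite `Σ⁽⁰⁾`, if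
`Δ⁽ᵏ⁺¹⁾` maximizes `ℓ(Σ⁽ᵏ⁾, ·)` and `Σ⁽ᵏ⁺¹⁾` maximizes `ℓ(·, Δ⁽ᵏ⁺¹⁾)` over positive
definite matrices, then `ℓ(Σ⁽ᵏ⁾,Δ⁽ᵏ⁾)` is nondecreasing in `k`, and every positive
definite accumulation point `(Σ̄,Δ̄)` of the iterates is a stationary point of `ℓ`:
`p·Σ̄ = XΔ̄⁻¹Xᵀ + 4ρ_r·Σ̄⁻¹` and `n·Δ̄ = XᵀΣ̄⁻¹X + 4ρ_c·Δ̄⁻¹`. -/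
theorem trcm_block_coordinate_ascent_stationary
    (n p : ℕ) (X : Matrix (Fin n) (Fin p) ℝ)
    (ρr ρc : ℝ) (hρr : 0 < ρr) (hρc : 0 < ρc)
    (ℓ : Matrix (Fin n) (Fin n) ℝ → Matrix (Fin p) (Fin p) ℝ → ℝ)
    (hℓ : ∀ (S : Matrix (Fin n) (Fin n) ℝ) (D : Matrix (Fin p) (Fin p) ℝ),
      ℓ S D = (p / 2 : ℝ) * Real.log (S⁻¹).det + (n / 2 : ℝ) * Real.log (D⁻¹).det
        - (1 / 2 : ℝ) * Matrix.trace (S⁻¹ * X * D⁻¹ * Xᵀ)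
        - ρr * Matrix.trace (S⁻¹ * S⁻¹) - ρc * Matrix.trace (D⁻¹ * D⁻¹))
    (S : ℕ → Matrix (Fin n) (Fin n) ℝ) (D : ℕ → Matrix (Fin p) (Fin p) ℝ)
    (hSpd : ∀ k, (S k).PosDef) (hDpd : ∀ k, (D k).PosDef)
    (hDmax : ∀ k, ∀ Δ : Matrix (Fin p) (Fin p) ℝ, Δ.PosDef →
      ℓ (S k) Δ ≤ ℓ (S k) (D (k + 1)))
    (hSmax : ∀ k, ∀ Sg : Matrix (Fin n) (Fin n) ℝ, Sg.PosDef →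
      ℓ Sg (D (k + 1)) ≤ ℓ (S (k + 1)) (D (k + 1))) :
    (∀ k, ℓ (S k) (D k) ≤ ℓ (S (k + 1)) (D (k + 1))) ∧
    (∀ (Sbar : Matrix (Fin n) (Fin n) ℝ) (Dbar : Matrix (Fin p) (Fin p) ℝ),
      Sbar.PosDef → Dbar.PosDef →
      (∃ φ : ℕ → ℕ, StrictMono φ ∧
        Tendsto (fun k => (S (φ k), D (φ k))) atTop (𝓝 (Sbar, Dbar))) →
      (p : ℝ) • Sbar = X * Dbar⁻¹ * Xᵀ + (4 * ρr) • Sbar⁻¹ ∧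
      (n : ℝ) • Dbar = Xᵀ * Sbar⁻¹ * X + (4 * ρc) • Dbar⁻¹) := by
  have mono : ∀ k, ℓ (S k) (D k) ≤ ℓ (S (k + 1)) (D (k + 1)) :=
    fun k => le_trans (hDmax k (D k) (hDpd k)) (hSmax k (S k) (hSpd k))
  refine ⟨mono, ?_⟩
  rintro Sbar Dbar hSb hDb ⟨φ, hφ, htend⟩
  -- continuity of the objective
  set H : Matrix (Fin n) (Fin n) ℝ × Matrix (Fin p) (Fin p) ℝ → ℝ := fun r =>
    (p / 2 : ℝ) * Real.log r.1.det + (n / 2 : ℝ) * Real.log r.2.det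
      - (1 / 2 : ℝ) * (r.1 * X * r.2 * Xᵀ).trace - ρr * (r.1 * r.1).trace
      - ρc * (r.2 * r.2).trace with hH_def
  set F : Matrix (Fin n) (Fin n) ℝ × Matrix (Fin p) (Fin p) ℝ → ℝ :=
    fun q => H (q.1⁻¹, q.2⁻¹) with hF_def
  have hF : ∀ Sg Dg, ℓ Sg Dg = F (Sg, Dg) := fun Sg Dg => hℓ Sg Dg
  have hRinv : ∀ (x : ℝ), x ≠ 0 → ContinuousAt Ring.inverse x := by
    intro x hx
    rw [Ring.inverse_eq_inv']
    exact continuousAt_inv₀ hx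
  have hFcont : ∀ (S₀ : Matrix (Fin n) (Fin n) ℝ) (D₀ : Matrix (Fin p) (Fin p) ℝ),
      S₀.PosDef → D₀.PosDef → ContinuousAt F (S₀, D₀) := by
    intro S₀ D₀ h1 h2
    have hinvS : ContinuousAt (fun M : Matrix (Fin n) (Fin n) ℝ => M⁻¹) S₀ :=
      continuousAt_matrix_inv S₀ (hRinv _ h1.det_pos.ne')
    have hinvD : ContinuousAt (fun M : Matrix (Fin p) (Fin p) ℝ => M⁻¹) D₀ :=
      continuousAt_matrix_inv D₀ (hRinv _ h2.det_pos.ne')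
    have hpair : ContinuousAt (fun q : Matrix (Fin n) (Fin n) ℝ × Matrix (Fin p) (Fin p) ℝ =>
        (q.1⁻¹, q.2⁻¹)) (S₀, D₀) :=
      ContinuousAt.prodMk (hinvS.comp continuous_fst.continuousAt)
        (hinvD.comp continuous_snd.continuousAt)
    have hH : ContinuousAt H (S₀⁻¹, D₀⁻¹) := by
      have hd1 : ContinuousAt (fun r : Matrix (Fin n) (Fin n) ℝ × Matrix (Fin p) (Fin p) ℝ =>
          Real.log r.1.det) (S₀⁻¹, D₀⁻¹) :=
        (Real.continuousAt_log (h1.inv.det_pos.ne')).tendsto.comp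
          ((continuous_fst.matrix_det.continuousAt
            (x := ((S₀⁻¹, D₀⁻¹) : Matrix (Fin n) (Fin n) ℝ × Matrix (Fin p) (Fin p) ℝ))).tendsto)
      have hd2 : ContinuousAt (fun r : Matrix (Fin n) (Fin n) ℝ × Matrix (Fin p) (Fin p) ℝ =>
          Real.log r.2.det) (S₀⁻¹, D₀⁻¹) :=
        (Real.continuousAt_log (h2.inv.det_pos.ne')).tendsto.comp
          ((continuous_snd.matrix_det.continuousAt
            (x := ((S₀⁻¹, D₀⁻¹) : Matrix (Fin n) (Fin n) ℝ × Matrix (Fin p) (Fin p) ℝ))).tendsto)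
      have ht3 : Continuous (fun r : Matrix (Fin n) (Fin n) ℝ × Matrix (Fin p) (Fin p) ℝ =>
          ((r.1 * X * r.2 * Xᵀ)).trace) :=
        (((continuous_fst.matrix_mul continuous_const).matrix_mul
          continuous_snd).matrix_mul continuous_const).matrix_trace
      have ht4 : Continuous (fun r : Matrix (Fin n) (Fin n) ℝ × Matrix (Fin p) (Fin p) ℝ =>
          (r.1 * r.1).trace) := (continuous_fst.matrix_mul continuous_fst).matrix_trace
      have ht5 : Continuous (fun r : Matrix (Fin n) (Fin n) ℝ × Matrix (Fin p) (Fin p) ℝ =>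
          (r.2 * r.2).trace) := (continuous_snd.matrix_mul continuous_snd).matrix_trace
      exact ((((continuousAt_const.mul hd1).add (continuousAt_const.mul hd2)).sub
        (continuousAt_const.mul ht3.continuousAt)).sub
        (continuousAt_const.mul ht4.continuousAt)).sub
        (continuousAt_const.mul ht5.continuousAt)
    exact hH.tendsto.comp hpair.tendsto
  set L : ℝ := ℓ Sbar Dbar with hL
  have amono : Monotone (fun k => ℓ (S k) (D k)) := monotone_nat_of_le_succ mono
  have hsubtend : Tendsto (fun k => ℓ (S (φ k)) (D (φ k))) atTop (𝓝 L) := by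
    have h := (hFcont Sbar Dbar hSb hDb).tendsto.comp htend
    have heq : (fun k => F (S (φ k), D (φ k))) = fun k => ℓ (S (φ k)) (D (φ k)) := by
      funext k; rw [hF]
    rw [hL, hF Sbar Dbar]
    exact heq ▸ h
  have hboundL : ∀ k, ℓ (S k) (D k) ≤ L := by
    intro k
    refine ge_of_tendsto hsubtend ?_
    refine Filter.eventually_atTop.mpr ⟨k, fun m hm => amono (hm.trans hφ.le_apply)⟩
  have htendS : Tendsto (fun k => S (φ k)) atTop (𝓝 Sbar) :=
    (continuous_fst.continuousAt.tendsto).comp htend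
  have htendD : Tendsto (fun k => D (φ k)) atTop (𝓝 Dbar) :=
    (continuous_snd.continuousAt.tendsto).comp htend
  have hDle : ∀ Δ : Matrix (Fin p) (Fin p) ℝ, Δ.PosDef → ℓ Sbar Δ ≤ L := by
    intro Δ hΔ
    have hc : Tendsto (fun k => ℓ (S (φ k)) Δ) atTop (𝓝 (ℓ Sbar Δ)) := by
      have h := (hFcont Sbar Δ hSb hΔ).tendsto.comp
        (htendS.prodMk_nhds (tendsto_const_nhds (x := Δ)))
      have heq : (fun k => F (S (φ k), Δ)) = fun k => ℓ (S (φ k)) Δ := by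
        funext k; rw [hF]
      rw [hF Sbar Δ]
      exact heq ▸ h
    refine le_of_tendsto hc (Filter.Eventually.of_forall fun k => ?_)
    exact (hDmax (φ k) Δ hΔ).trans ((hSmax (φ k) (S (φ k)) (hSpd _)).trans (hboundL (φ k + 1)))
  have hSle : ∀ Sg : Matrix (Fin n) (Fin n) ℝ, Sg.PosDef → ℓ Sg Dbar ≤ L := by
    intro Sg hSg
    have hc : Tendsto (fun k => ℓ Sg (D (φ k))) atTop (𝓝 (ℓ Sg Dbar)) := by
      have h := (hFcont Sg Dbar hSg hDb).tendsto.comp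
        ((tendsto_const_nhds (x := Sg)).prodMk_nhds htendD)
      have heq : (fun k => F (Sg, D (φ k))) = fun k => ℓ Sg (D (φ k)) := by
        funext k; rw [hF]
      rw [hF Sg Dbar]
      exact heq ▸ h
    refine le_of_tendsto hc ?_
    filter_upwards [Filter.eventually_ge_atTop 1] with k hk
    obtain ⟨mm, hmm⟩ : ∃ mm, φ k = mm + 1 :=
      ⟨φ k - 1, (Nat.succ_pred_eq_of_pos (hk.trans hφ.le_apply)).symm⟩
    rw [hmm]
    exact (hSmax mm Sg hSg).trans (hboundL (mm + 1))
  have hSdet : IsUnit Sbar.det := isUnit_iff_ne_zero.mpr hSb.det_pos.ne'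
  have hDdet : IsUnit Dbar.det := isUnit_iff_ne_zero.mpr hDb.det_pos.ne'
  have hSinvT : (Sbar⁻¹)ᵀ = Sbar⁻¹ := by
    rw [← Matrix.conjTranspose_eq_transpose_of_trivial]; exact hSb.inv.1
  have hDinvT : (Dbar⁻¹)ᵀ = Dbar⁻¹ := by
    rw [← Matrix.conjTranspose_eq_transpose_of_trivial]; exact hDb.inv.1
  constructor
  · -- S-side stationarity
    set A1 : Matrix (Fin n) (Fin n) ℝ := X * Dbar⁻¹ * Xᵀ with hA1
    have hA1T : A1ᵀ = A1 := by
      rw [hA1, Matrix.transpose_mul, Matrix.transpose_mul, Matrix.transpose_transpose,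
        hDinvT, Matrix.mul_assoc]
    have htr : ∀ Q : Matrix (Fin n) (Fin n) ℝ,
        (Q * X * Dbar⁻¹ * Xᵀ).trace = (A1 * Q).trace := by
      intro Q
      rw [show Q * X * Dbar⁻¹ * Xᵀ = Q * (X * Dbar⁻¹ * Xᵀ) by
        simp only [Matrix.mul_assoc], trace_mul_comm]
    have hmax1 : ∀ Q : Matrix (Fin n) (Fin n) ℝ, Q.PosDef →
        ((p:ℝ)/2) * Real.log Q.det - (1/2 : ℝ) * (A1 * Q).trace - ρr * (Q * Q).trace ≤
        ((p:ℝ)/2) * Real.log Sbar⁻¹.det - (1/2 : ℝ) * (A1 * Sbar⁻¹).trace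
          - ρr * (Sbar⁻¹ * Sbar⁻¹).trace := by
      intro Q hQ
      have h := hSle Q⁻¹ hQ.inv
      rw [hL, hℓ, hℓ] at h
      rw [Matrix.nonsing_inv_nonsing_inv Q (isUnit_iff_ne_zero.mpr hQ.det_pos.ne')] at h
      rw [htr Q, htr Sbar⁻¹] at h
      linarith
    have hkey := first_order ((p:ℝ)/2) ρr hρr A1 Sbar⁻¹ hA1T hSb.inv hmax1
    rw [Matrix.nonsing_inv_nonsing_inv Sbar hSdet] at hkey
    rw [show (2 * ((p:ℝ)/2)) = (p:ℝ) by ring] at hkey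
    exact hkey
  · -- D-side stationarity
    set A2 : Matrix (Fin p) (Fin p) ℝ := Xᵀ * Sbar⁻¹ * X with hA2
    have hA2T : A2ᵀ = A2 := by
      rw [hA2, Matrix.transpose_mul, Matrix.transpose_mul, Matrix.transpose_transpose,
        hSinvT, Matrix.mul_assoc]
    have htr : ∀ Q : Matrix (Fin p) (Fin p) ℝ,
        (Sbar⁻¹ * X * Q * Xᵀ).trace = (A2 * Q).trace := by
      intro Q
      rw [trace_mul_comm]
      simp only [← Matrix.mul_assoc]
      rfl
    have hmax2 : ∀ Q : Matrix (Fin p) (Fin p) ℝ, Q.PosDef →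
        ((n:ℝ)/2) * Real.log Q.det - (1/2 : ℝ) * (A2 * Q).trace - ρc * (Q * Q).trace ≤
        ((n:ℝ)/2) * Real.log Dbar⁻¹.det - (1/2 : ℝ) * (A2 * Dbar⁻¹).trace
          - ρc * (Dbar⁻¹ * Dbar⁻¹).trace := by
      intro Q hQ
      have h := hDle Q⁻¹ hQ.inv
      rw [hL, hℓ, hℓ] at h
      rw [Matrix.nonsing_inv_nonsing_inv Q (isUnit_iff_ne_zero.mpr hQ.det_pos.ne')] at h
      rw [htr Q, htr Dbar⁻¹] at h
      linarith
    have hkey := first_order ((n:ℝ)/2) ρc hρc A2 Dbar⁻¹ hA2T hDb.inv hmax2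
    rw [Matrix.nonsing_inv_nonsing_inv Dbar hDdet] at hkey
    rw [show (2 * ((n:ℝ)/2)) = (n:ℝ) by ring] at hkey
    exact hkey
end

section
/- Let n, p ≥ 1, ρ_r, ρ_c > 0 and d > 0. Set c₁ = −4ρ_c·p², c₂ = 32ρ_rρ_c·p + d⁴·(n−p), c₃ = 4ρ_r·(d⁴ − 16ρ_rρ_c), and define β = √((−c₂ − √(c₂² − 4c₁c₃))/(2c₁)) and θ = d²·β/(p·β² − 4ρ_r). Then the discriminant satisfies c₂² − 4c₁c₃ ≥ 0 and −c₂ − √(c₂² − 4c₁c₃) has the same sign as c₁ (so β is a well-defined positive real), p·β² − 4ρ_r > 0 so θ > 0, and the pair (β, θ) satisfies the two stationarity equations of the L2:L2 transposable model: p·θ·β² − d²·β − 4ρ_r·θ = 0 and n·β·θ² − d²·θ − 4ρ_c·β = 0. -/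
/-- For `n, p ≥ 1`, `ρ_r, ρ_c > 0`, `d > 0`, with
`c₁ = −4ρ_c p²`, `c₂ = 32ρ_rρ_c p + d⁴(n−p)`, `c₃ = 4ρ_r(d⁴ − 16ρ_rρ_c)`,
`β = √((−c₂ − √(c₂² − 4c₁c₃))/(2c₁))` and `θ = d²β/(pβ² − 4ρ_r)`:
the discriminant is nonnegative, `−c₂ − √(c₂² − 4c₁c₃)` has the same sign as `c₁`
(so `β` is a well-defined positive real), `pβ² − 4ρ_r > 0` so `θ > 0`, and `(β, θ)`
solves the coupled stationarity equations `pθβ² − d²β − 4ρ_rθ = 0` and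
`nβθ² − d²θ − 4ρ_cβ = 0`. -/
theorem trcm_l2l2_eigenvalue_system
    (n p : ℕ) (hn : 1 ≤ n) (hp : 1 ≤ p)
    (ρr ρc d : ℝ) (hρr : 0 < ρr) (hρc : 0 < ρc) (hd : 0 < d)
    (c₁ c₂ c₃ β θ : ℝ)
    (hc₁ : c₁ = -4 * ρc * (p : ℝ) ^ 2)
    (hc₂ : c₂ = 32 * ρr * ρc * p + d ^ 4 * ((n : ℝ) - p))
    (hc₃ : c₃ = 4 * ρr * (d ^ 4 - 16 * ρr * ρc))
    (hβ : β = Real.sqrt ((-c₂ - Real.sqrt (c₂ ^ 2 - 4 * c₁ * c₃)) / (2 * c₁)))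
    (hθ : θ = d ^ 2 * β / (p * β ^ 2 - 4 * ρr)) :
    0 ≤ c₂ ^ 2 - 4 * c₁ * c₃ ∧
    (-c₂ - Real.sqrt (c₂ ^ 2 - 4 * c₁ * c₃)) * c₁ > 0 ∧
    0 < β ∧
    0 < p * β ^ 2 - 4 * ρr ∧
    0 < θ ∧
    p * θ * β ^ 2 - d ^ 2 * β - 4 * ρr * θ = 0 ∧
    n * β * θ ^ 2 - d ^ 2 * θ - 4 * ρc * β = 0 := by
  have hpR : (1:ℝ) ≤ p := by exact_mod_cast hp
  have hnR : (1:ℝ) ≤ n := by exact_mod_cast hn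
  have hp0 : (0:ℝ) < p := by linarith
  have hn0 : (0:ℝ) < n := by linarith
  have hd4 : 0 < d ^ 4 := by positivity
  have hc₁neg : c₁ < 0 := by
    have : 0 < 4 * ρc * (p:ℝ) ^ 2 := by positivity
    rw [hc₁]; linarith
  have hDeq : c₂ ^ 2 - 4 * c₁ * c₃
      = 64 * ρr * ρc * p * n * d ^ 4 + (d ^ 4) ^ 2 * ((n:ℝ) - p) ^ 2 := by
    subst hc₁ hc₂ hc₃; ring
  have hDpos : 0 < c₂ ^ 2 - 4 * c₁ * c₃ := by rw [hDeq]; positivity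
  have hD0 : 0 ≤ c₂ ^ 2 - 4 * c₁ * c₃ := le_of_lt hDpos
  set s := Real.sqrt (c₂ ^ 2 - 4 * c₁ * c₃) with hs
  have hs0 : 0 ≤ s := Real.sqrt_nonneg _
  have hs2 : s ^ 2 = c₂ ^ 2 - 4 * c₁ * c₃ := Real.sq_sqrt hD0
  -- s > d^4 (p - n)
  have hsgt : d ^ 4 * ((p:ℝ) - n) < s := by
    nlinarith [hDeq, hs2, hs0,
      mul_pos (mul_pos (mul_pos (mul_pos hρr hρc) hp0) hn0) hd4]
  have hnum : -c₂ - s < 0 := by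
    rw [hc₂]; nlinarith [hsgt, mul_pos hρr hρc, hd4]
  have h2 : (-c₂ - s) * c₁ > 0 := mul_pos_of_neg_of_neg hnum hc₁neg
  have hq : 0 < (-c₂ - s) / (2 * c₁) := div_pos_of_neg_of_neg hnum (by linarith)
  have hβpos : 0 < β := hβ ▸ Real.sqrt_pos.mpr hq
  have hβ2 : β ^ 2 = (-c₂ - s) / (2 * c₁) := by rw [hβ]; exact Real.sq_sqrt (le_of_lt hq)
  have hc₁ne : c₁ ≠ 0 := ne_of_lt hc₁neg
  have hβ2' : 2 * c₁ * β ^ 2 = -c₂ - s := by rw [hβ2]; field_simp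
  have hquad : c₁ * (β ^ 2) ^ 2 + c₂ * β ^ 2 + c₃ = 0 := by
    have h : (2 * c₁ * β ^ 2 + c₂) ^ 2 = s ^ 2 := by rw [hβ2']; ring
    rw [hs2] at h
    have h4 : 4 * c₁ * (c₁ * (β ^ 2) ^ 2 + c₂ * β ^ 2 + c₃) = 4 * c₁ * 0 := by
      linear_combination h
    exact mul_left_cancel₀ (by positivity) h4
  have hquad' : (-4 * ρc * (p:ℝ) ^ 2) * (β ^ 2) ^ 2
      + (32 * ρr * ρc * p + d ^ 4 * ((n:ℝ) - p)) * β ^ 2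
      + 4 * ρr * (d ^ 4 - 16 * ρr * ρc) = 0 := by
    rw [← hc₁, ← hc₂, ← hc₃]; exact hquad
  have hS : 0 < (p:ℝ) * β ^ 2 - 4 * ρr := by
    have h8 : 8 * ρc * (p:ℝ) ^ 2 * β ^ 2 = c₂ + s := by
      rw [hc₁] at hβ2'; linarith [hβ2']
    rw [hc₂] at h8
    have heq : (8 * ρc * (p:ℝ)) * ((p:ℝ) * β ^ 2 - 4 * ρr) = d ^ 4 * ((n:ℝ) - p) + s := by
      linear_combination h8
    have hrpos : 0 < d ^ 4 * ((n:ℝ) - p) + s := by linarith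
    have ha : 0 < 8 * ρc * (p:ℝ) := by positivity
    by_contra hcon
    push_neg at hcon
    have hle : (8 * ρc * (p:ℝ)) * ((p:ℝ) * β ^ 2 - 4 * ρr) ≤ 0 :=
      mul_nonpos_of_nonneg_of_nonpos (le_of_lt ha) hcon
    linarith
  have hSne : (p:ℝ) * β ^ 2 - 4 * ρr ≠ 0 := ne_of_gt hS
  have hθpos : 0 < θ := by rw [hθ]; positivity
  have hθS : θ * ((p:ℝ) * β ^ 2 - 4 * ρr) = d ^ 2 * β := by
    rw [hθ]; exact div_mul_cancel₀ _ hSne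
  refine ⟨hD0, h2, hβpos, hS, hθpos, ?_, ?_⟩
  · linear_combination hθS
  · have key : ((p:ℝ) * β ^ 2 - 4 * ρr) ^ 2 * (n * β * θ ^ 2 - d ^ 2 * θ - 4 * ρc * β) = 0 := by
      linear_combination (n * β * (θ * ((p:ℝ) * β ^ 2 - 4 * ρr) + d ^ 2 * β)
        - d ^ 2 * ((p:ℝ) * β ^ 2 - 4 * ρr)) * hθS + β * hquad'
    rcases mul_eq_zero.mp key with h | h
    · exact absurd h (pow_ne_zero 2 hSne)
    · exact h
end

section
/- Let Σ ∈ ℝ^{n×n} and Δ ∈ ℝ^{p×p} be symmetric positive definite, ν ∈ ℝⁿ, μ ∈ ℝ^p, M = ν·1_pᵀ + 1_n·μᵀ, and Ω = Δ⊗Σ the np×np matrix with Ω[(i,j),(i',j')] = Σ_{i,i'}·Δ_{j,j'}. Fix a row index i, let k denote the remaining n−1 row indices, and let {1,…,p} = m_i ⊔ o_i be any partition of the columns. Let x ∈ ℝ^{n×p}, define ψ = M_{i,·} + Σ_{i,k}·Σ_{k,k}⁻¹·(x_{k,·} − M_{k,·}) ∈ ℝ^p, γ = Σ_{i,i} − Σ_{i,k}·Σ_{k,k}⁻¹·Σ_{k,i}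 (a positive scalar), and Γ = γ·Δ. Let S = {i}×m_i and O = ({1,…,n}×{1,…,p}) \ S. Then Ω_{O,O} is positive definite and the one-step (direct) Gaussian conditioning formulas agree with the two-step formulas: (a) vec(M)_S + Ω_{S,O}·Ω_{O,O}⁻¹·(vec(x)_O − vec(M)_O) = ψ_{m_i} + Γ_{m_i,o_i}·Γ_{o_i,o_i}⁻¹·(x_{i,o_i} − ψ_{o_i}), and (b) Ω_{S,S} − Ω_{S,O}·Ω_{O,O}⁻¹·Ω_{O,S} = Γ_{m_i,m_i} − Γ_{m_i,o_i}·Γ_{o_i,o_i}⁻¹·Γ_{o_i,m_i}. (This is the row version of the two-step conditional distribution for the mean-restricted matrix-variate normal: X_{i,m_i} given the rest of the matrix is Gaussian with the displayed mean and covariance.) -/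
open Matrix

open Kronecker


lemma sum_split_ne {α : Type*} [Fintype α] [DecidableEq α] (i0 : α) (f : α → ℝ) :
    ∑ a, f a = f i0 + ∑ c : {a : α // a ≠ i0}, f c.1 := by
  rw [← Finset.sum_compl_add_sum ({i0} : Finset α) f, Finset.sum_singleton, add_comm]
  congr 1
  exact Finset.sum_subtype ({i0}ᶜ : Finset α)
    (fun x => by simp [Finset.mem_compl, Finset.mem_singleton]) f

lemma sum_split_mem {α : Type*} [Fintype α] [DecidableEq α] (s : Finset α) (f : α → ℝ) :
    ∑ a, f a = (∑ c : {a : α // a ∈ s}, f c.1) + ∑ c : {a : α // a ∉ s}, f c.1 := by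
  rw [← Finset.sum_add_sum_compl s f]
  congr 1
  · exact Finset.sum_subtype s (fun x => Iff.rfl) f
  · exact Finset.sum_subtype (sᶜ : Finset α) (fun x => by simp [Finset.mem_compl]) f

lemma posDef_transpose_mul_self {N : Type*} [Fintype N] [DecidableEq N]
    (C : Matrix N N ℝ) (hC : IsUnit C.det) : (Cᵀ * C).PosDef := by
  refine PosDef.of_dotProduct_mulVec_pos (by simpa using isHermitian_conjTranspose_mul_self C) fun y hy => ?_
  have hCy : C *ᵥ y ≠ 0 := by
    have hinj := (Matrix.mulVec_injective_iff_isUnit (A := C)).mpr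
      ((Matrix.isUnit_iff_isUnit_det C).mpr hC)
    intro h
    exact hy (hinj (by simpa using h))
  have h1 : (star y) ⬝ᵥ ((Cᵀ * C) *ᵥ y) = (C *ᵥ y) ⬝ᵥ (C *ᵥ y) := by
    rw [star_trivial, ← mulVec_mulVec, dotProduct_mulVec, vecMul_transpose]
  rw [h1]
  simpa [star_trivial] using (dotProduct_star_self_pos_iff (v := C *ᵥ y)).mpr hCy


lemma posDef_kronecker {I J : Type*} [Fintype I] [Fintype J] [DecidableEq I] [DecidableEq J]
    {A : Matrix I I ℝ} {B : Matrix J J ℝ} (hA : A.PosDef) (hB : B.PosDef) :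
    (A ⊗ₖ B).PosDef := by
  exact hA.kronecker hB

lemma posDef_submatrix_inj {I J : Type*} [Fintype I] [Fintype J] [DecidableEq I] [DecidableEq J]
    {A : Matrix I I ℝ} (hA : A.PosDef) {f : J → I} (hf : Function.Injective f) :
    (A.submatrix f f).PosDef := by
  refine PosDef.of_dotProduct_mulVec_pos (hA.1.submatrix f) fun y hy => ?_
  set z : I → ℝ := Function.extend f y 0 with hz
  have hzf : ∀ a, z (f a) = y a := fun a => hf.extend_apply y 0 a
  have hz0 : ∀ i, (¬ ∃ a, f a = i) → z i = 0 := by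
    intro i hi
    rw [hz, Function.extend_apply' _ _ _ hi]
    rfl
  have hkey : ∀ g : I → ℝ, ∑ i, z i * g i = ∑ a, y a * g (f a) := by
    intro g
    have h2 : ∑ i ∈ Finset.univ.image f, z i * g i = ∑ a, z (f a) * g (f a) :=
      Finset.sum_image (fun a _ b _ h => hf h)
    have h3 : ∑ i, z i * g i = ∑ i ∈ Finset.univ.image f, z i * g i :=
      (Finset.sum_subset (Finset.subset_univ _) (fun i _ hi => by
        rw [hz0 i (fun hex => hi (Finset.mem_image.mpr ⟨hex.choose, Finset.mem_univ _, hex.choose_spec⟩)), zero_mul])).symm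
    rw [h3, h2]
    exact Finset.sum_congr rfl (fun a _ => by rw [hzf])
  have hzne : z ≠ 0 := by
    intro h
    apply hy
    funext a
    have h' := congrFun h (f a)
    simpa [hzf a] using h'
  have hq : (star y) ⬝ᵥ ((A.submatrix f f) *ᵥ y) = (star z) ⬝ᵥ (A *ᵥ z) := by
    rw [star_trivial, star_trivial]
    simp only [dotProduct, mulVec, dotProduct, Matrix.submatrix_apply]
    rw [hkey (fun i => ∑ j, A i j * z j)]
    refine Finset.sum_congr rfl (fun a _ => ?_)
    congr 1
    have : ∑ j, A (f a) j * z j = ∑ j, z j * A (f a) j := by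
      exact Finset.sum_congr rfl (fun j _ => mul_comm _ _)
    rw [this, hkey (fun j => A (f a) j)]
    exact (Finset.sum_congr rfl (fun b _ => mul_comm _ _))
  rw [hq]
  exact hA.dotProduct_mulVec_pos hzne

def splitEquivO (n p : ℕ) (i0 : Fin n) (mi : Finset (Fin p)) :
    ({a : Fin n // a ≠ i0} × Fin p) ⊕ {j : Fin p // j ∉ mi} ≃
      {q : Fin n × Fin p // ¬(q.1 = i0 ∧ q.2 ∈ mi)} where
  toFun z := match z with
    | Sum.inl (a, j) => ⟨(a.1, j), fun h => a.2 h.1⟩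
    | Sum.inr j => ⟨(i0, j.1), fun h => j.2 h.2⟩
  invFun b := if h : b.1.1 = i0 then Sum.inr ⟨b.1.2, fun hm => b.2 ⟨h, hm⟩⟩
    else Sum.inl (⟨b.1.1, h⟩, b.1.2)
  left_inv := by
    rintro (⟨a, j⟩ | j)
    · simp [a.2]
    · simp
  right_inv := by
    rintro ⟨⟨b1, b2⟩, hb⟩
    by_cases h : b1 = i0
    · subst h; simp
    · simp [h]

lemma sum_split_O {n p : ℕ} (i0 : Fin n) (mi : Finset (Fin p))
    (f : {q : Fin n × Fin p // ¬(q.1 = i0 ∧ q.2 ∈ mi)} → ℝ) :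
    ∑ b, f b = (∑ a : {a : Fin n // a ≠ i0}, ∑ j : Fin p, f ⟨(a.1, j), fun h => a.2 h.1⟩)
      + ∑ j : {j : Fin p // j ∉ mi}, f ⟨(i0, j.1), fun h => j.2 h.2⟩ := by
  rw [← Equiv.sum_comp (splitEquivO n p i0 mi) f, Fintype.sum_sum_type, Fintype.sum_prod_type]
  rfl


/-- **row version of the two-step conditional distribution.**
For the mean-restricted matrix-variate normal with mean `M = ν1ᵀ + 1μᵀ` and
covariance `Ω = Δ⊗Σ`, fix a row `i`, let `k` be the remaining rows and let the
columns be partitioned into `m_i` and `o_i`.  With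
`ψ = M_{i,·} + Σ_{i,k}Σ_{k,k}⁻¹(x_{k,·} − M_{k,·})`,
`γ = Σ_{i,i} − Σ_{i,k}Σ_{k,k}⁻¹Σ_{k,i}` (a positive scalar) and `Γ = γ·Δ`,
the submatrix `Ω_{O,O}` (with `S = {i}×m_i`, `O = Sᶜ`) is positive definite and the
one-step Gaussian conditioning formulas agree with the two-step formulas:
(a) conditional mean, (b) conditional covariance. -/
theorem two_step_conditional_row
    (n p : ℕ)
    (Sig : Matrix (Fin n) (Fin n) ℝ) (Del : Matrix (Fin p) (Fin p) ℝ)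
    (hSig : Sig.PosDef) (hDel : Del.PosDef)
    (ν : Fin n → ℝ) (μ : Fin p → ℝ)
    (M : Matrix (Fin n) (Fin p) ℝ) (hM : ∀ i j, M i j = ν i + μ j)
    (Om : Matrix (Fin n × Fin p) (Fin n × Fin p) ℝ)
    (hOm : ∀ q q' : Fin n × Fin p, Om q q' = Sig q.1 q'.1 * Del q.2 q'.2)
    (i0 : Fin n) (mi : Finset (Fin p))
    (x : Matrix (Fin n) (Fin p) ℝ)
    (Skk : Matrix {a : Fin n // a ≠ i0} {a : Fin n // a ≠ i0} ℝ)
    (hSkk : ∀ a b, Skk a b = Sig a.1 b.1)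
    (ψ : Fin p → ℝ)
    (hψ : ∀ j, ψ j = M i0 j +
      (fun a : {a : Fin n // a ≠ i0} => Sig i0 a.1) ⬝ᵥ
        (Skk⁻¹ *ᵥ fun b : {a : Fin n // a ≠ i0} => x b.1 j - M b.1 j))
    (γ : ℝ)
    (hγ : γ = Sig i0 i0 -
      (fun a : {a : Fin n // a ≠ i0} => Sig i0 a.1) ⬝ᵥ
        (Skk⁻¹ *ᵥ fun b : {a : Fin n // a ≠ i0} => Sig b.1 i0))
    (Γ : Matrix (Fin p) (Fin p) ℝ) (hΓ : Γ = γ • Del)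
    -- blocks of Ω with respect to S = {i0} × m_i and O = Sᶜ
    (OmSS : Matrix {q : Fin n × Fin p // q.1 = i0 ∧ q.2 ∈ mi}
                   {q : Fin n × Fin p // q.1 = i0 ∧ q.2 ∈ mi} ℝ)
    (hOmSS : ∀ a b, OmSS a b = Om a.1 b.1)
    (OmSO : Matrix {q : Fin n × Fin p // q.1 = i0 ∧ q.2 ∈ mi}
                   {q : Fin n × Fin p // ¬(q.1 = i0 ∧ q.2 ∈ mi)} ℝ)
    (hOmSO : ∀ a b, OmSO a b = Om a.1 b.1)
    (OmOS : Matrix {q : Fin n × Fin p // ¬(q.1 = i0 ∧ q.2 ∈ mi)}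
                   {q : Fin n × Fin p // q.1 = i0 ∧ q.2 ∈ mi} ℝ)
    (hOmOS : ∀ a b, OmOS a b = Om a.1 b.1)
    (OmOO : Matrix {q : Fin n × Fin p // ¬(q.1 = i0 ∧ q.2 ∈ mi)}
                   {q : Fin n × Fin p // ¬(q.1 = i0 ∧ q.2 ∈ mi)} ℝ)
    (hOmOO : ∀ a b, OmOO a b = Om a.1 b.1)
    -- blocks of Γ with respect to m_i and o_i = m_iᶜ
    (Gmm : Matrix {j : Fin p // j ∈ mi} {j : Fin p // j ∈ mi} ℝ)
    (hGmm : ∀ a b, Gmm a b = Γ a.1 b.1)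
    (Gmo : Matrix {j : Fin p // j ∈ mi} {j : Fin p // j ∉ mi} ℝ)
    (hGmo : ∀ a b, Gmo a b = Γ a.1 b.1)
    (Gom : Matrix {j : Fin p // j ∉ mi} {j : Fin p // j ∈ mi} ℝ)
    (hGom : ∀ a b, Gom a b = Γ a.1 b.1)
    (Goo : Matrix {j : Fin p // j ∉ mi} {j : Fin p // j ∉ mi} ℝ)
    (hGoo : ∀ a b, Goo a b = Γ a.1 b.1) :
    0 < γ ∧ OmOO.PosDef ∧
    (∀ q : {q : Fin n × Fin p // q.1 = i0 ∧ q.2 ∈ mi},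
      M q.1.1 q.1.2 +
        (OmSO *ᵥ (OmOO⁻¹ *ᵥ
          fun b : {q : Fin n × Fin p // ¬(q.1 = i0 ∧ q.2 ∈ mi)} =>
            x b.1.1 b.1.2 - M b.1.1 b.1.2)) q
      = ψ q.1.2 +
        (Gmo *ᵥ (Goo⁻¹ *ᵥ
          fun b : {j : Fin p // j ∉ mi} => x i0 b.1 - ψ b.1)) ⟨q.1.2, q.2.2⟩) ∧
    (∀ a b : {q : Fin n × Fin p // q.1 = i0 ∧ q.2 ∈ mi},
      (OmSS - OmSO * OmOO⁻¹ * OmOS) a b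
        = (Gmm - Gmo * Goo⁻¹ * Gom) ⟨a.1.2, a.2.2⟩ ⟨b.1.2, b.2.2⟩) := by
  classical
  -- Skk
  have hSkkE : Skk = Sig.submatrix Subtype.val Subtype.val := by
    ext a b; simp [hSkk]
  have hSkkPD : Skk.PosDef := by
    rw [hSkkE]; exact posDef_submatrix_inj hSig Subtype.val_injective
  have hSkkU : IsUnit Skk.det := hSkkPD.det_pos.ne'.isUnit
  set e : {a : Fin n // a ≠ i0} → ℝ := (fun a => Sig i0 a.1) ᵥ* Skk⁻¹ with he
  have hF1 : ∀ c : {a : Fin n // a ≠ i0}, ∑ a, e a * Sig a.1 c.1 = Sig i0 c.1 := by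
    intro c
    have h1 : e ᵥ* Skk = fun a : {a : Fin n // a ≠ i0} => Sig i0 a.1 := by
      rw [he, vecMul_vecMul, Matrix.nonsing_inv_mul _ hSkkU, vecMul_one]
    have h2 := congrFun h1 c
    simpa [Matrix.vecMul, dotProduct, hSkk] using h2
  have hdot : ∀ g : {a : Fin n // a ≠ i0} → ℝ,
      (fun a : {a : Fin n // a ≠ i0} => Sig i0 a.1) ⬝ᵥ (Skk⁻¹ *ᵥ g) = ∑ a, e a * g a := by
    intro g
    rw [dotProduct_mulVec, ← he]
    rfl
  have hF2 : ∑ a, e a * Sig a.1 i0 = Sig i0 i0 - γ := by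
    have h := hγ
    rw [hdot] at h
    linarith
  have hψ' : ∀ j, ψ j = M i0 j + ∑ a, e a * (x a.1 j - M a.1 j) := by
    intro j; rw [hψ j, hdot]
  -- positivity of γ
  have hγpos : 0 < γ := by
    set u0 : {a : Fin n // a ≠ i0} → ℝ :=
      Skk⁻¹ *ᵥ (fun b : {a : Fin n // a ≠ i0} => Sig b.1 i0) with hu0
    have hSkku : ∀ c : {a : Fin n // a ≠ i0}, ∑ b, Sig c.1 b.1 * u0 b = Sig c.1 i0 := by
      intro c
      have h1 : Skk *ᵥ u0 = fun b : {a : Fin n // a ≠ i0} => Sig b.1 i0 := by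
        rw [hu0, mulVec_mulVec, Matrix.mul_nonsing_inv _ hSkkU, one_mulVec]
      have h2 := congrFun h1 c
      simpa [Matrix.mulVec, dotProduct, hSkk] using h2
    have hγ2 : γ = Sig i0 i0 - ∑ c : {a : Fin n // a ≠ i0}, Sig i0 c.1 * u0 c := by
      rw [hγ]
      rfl
    set y : Fin n → ℝ := fun a => if h : a = i0 then 1 else -u0 ⟨a, h⟩ with hy
    have hyne : y ≠ 0 := by
      intro h
      have h0 := congrFun h i0
      simp [hy] at h0
    have hinner : ∀ a, ∑ b, Sig a b * y b
        = Sig a i0 - ∑ c : {a : Fin n // a ≠ i0}, Sig a c.1 * u0 c := by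
      intro a
      rw [sum_split_ne i0 (fun b => Sig a b * y b)]
      have h1 : y i0 = 1 := by simp [hy]
      have h2 : ∀ c : {a : Fin n // a ≠ i0}, y c.1 = -u0 c := fun c => by simp [hy, c.2]
      rw [h1]
      simp only [h2, mul_neg]
      rw [Finset.sum_neg_distrib]
      ring
    have hq : ∑ a, y a * (∑ b, Sig a b * y b) = γ := by
      rw [sum_split_ne i0 (fun a => y a * ∑ b, Sig a b * y b)]
      have h2 : ∀ c : {a : Fin n // a ≠ i0}, y c.1 * (∑ b, Sig c.1 b * y b) = 0 := by
        intro c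
        rw [hinner c.1, hSkku c]
        simp
      have h1 : y i0 * (∑ b, Sig i0 b * y b) = γ := by
        rw [hinner i0]
        have h3 : y i0 = 1 := by simp [hy]
        rw [h3, hγ2]
        ring
      rw [h1]
      simp [h2]
    have hpos := hSig.dotProduct_mulVec_pos hyne
    have hrw : star y ⬝ᵥ (Sig *ᵥ y) = ∑ a, y a * (∑ b, Sig a b * y b) := by
      simp [star_trivial, dotProduct, Matrix.mulVec]
    rw [hrw, hq] at hpos
    exact hpos
  -- Del blocks
  set Doo : Matrix {j : Fin p // j ∉ mi} {j : Fin p // j ∉ mi} ℝ :=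
    Del.submatrix Subtype.val Subtype.val with hDooE
  set Dmo : Matrix {j : Fin p // j ∈ mi} {j : Fin p // j ∉ mi} ℝ :=
    Del.submatrix Subtype.val Subtype.val with hDmoE
  have hDooPD : Doo.PosDef := posDef_submatrix_inj hDel Subtype.val_injective
  have hDooU : IsUnit Doo.det := hDooPD.det_pos.ne'.isUnit
  set H : Matrix {j : Fin p // j ∈ mi} {j : Fin p // j ∉ mi} ℝ := Dmo * Doo⁻¹ with hHE
  have hHDoo : H * Doo = Dmo := by
    rw [hHE, Matrix.nonsing_inv_mul_cancel_right _ _ hDooU]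
  have hF3 : ∀ (jm : {j : Fin p // j ∈ mi}) (l : {j : Fin p // j ∉ mi}),
      ∑ j' : {j : Fin p // j ∉ mi}, H jm j' * Del j'.1 l.1 = Del jm.1 l.1 := by
    intro jm l
    have h2 := congrFun (congrFun hHDoo jm) l
    simpa [Matrix.mul_apply, hDooE, hDmoE, Matrix.submatrix_apply] using h2
  -- Goo relations
  have hGooE2 : Goo = γ • Doo := by
    ext a b
    simp [hGoo, hΓ, hDooE, Matrix.smul_apply, Matrix.submatrix_apply]
  have hGooU : IsUnit Goo.det := by
    rw [hGooE2, Matrix.det_smul]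
    exact (isUnit_iff_ne_zero.mpr (pow_ne_zero _ hγpos.ne')).mul
      (isUnit_iff_ne_zero.mpr hDooPD.det_pos.ne')
  have hGmoH : Gmo * Goo⁻¹ = H := by
    have h1 : Gmo = H * Goo := by
      rw [hGooE2, Matrix.mul_smul, hHDoo]
      ext a b
      simp [hGmo, hΓ, hDmoE, Matrix.smul_apply, Matrix.submatrix_apply]
    rw [h1, Matrix.mul_nonsing_inv_cancel_right _ _ hGooU]
  -- Om posdef
  have hOmE : Om = Sig ⊗ₖ Del := by
    ext q q'
    simp [hOm, Matrix.kroneckerMap_apply]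
  have hOmPD : Om.PosDef := by rw [hOmE]; exact posDef_kronecker hSig hDel
  have hOmOOE : OmOO = Om.submatrix Subtype.val Subtype.val := by
    ext a b; simp [hOmOO]
  have hOmOOPD : OmOO.PosDef := by
    rw [hOmOOE]; exact posDef_submatrix_inj hOmPD Subtype.val_injective
  have hOmOOU : IsUnit OmOO.det := hOmOOPD.det_pos.ne'.isUnit
  -- L
  set Hd : Fin p → Fin p → ℝ :=
    fun j j' => if h : j ∈ mi ∧ j' ∉ mi then H ⟨j, h.1⟩ ⟨j', h.2⟩ else 0 with hHdDef
  set e' : Fin n → ℝ := fun a => if h : a = i0 then 0 else e ⟨a, h⟩ with he'Def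
  set L : Matrix {q : Fin n × Fin p // q.1 = i0 ∧ q.2 ∈ mi}
      {q : Fin n × Fin p // ¬(q.1 = i0 ∧ q.2 ∈ mi)} ℝ :=
    fun s b => if b.1.1 = i0 then Hd s.1.2 b.1.2
      else e' b.1.1 * ((if b.1.2 = s.1.2 then 1 else 0) - Hd s.1.2 b.1.2) with hLDef
  have hHdsum : ∀ (j2 : Fin p) (hj2 : j2 ∈ mi) (g : Fin p → ℝ),
      ∑ j', Hd j2 j' * g j' = ∑ j' : {j : Fin p // j ∉ mi}, H ⟨j2, hj2⟩ j' * g j'.1 := by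
    intro j2 hj2 g
    rw [sum_split_mem mi (fun j' => Hd j2 j' * g j')]
    have h1 : ∀ c : {a : Fin p // a ∈ mi}, Hd j2 c.1 = 0 := fun c => by
      simp [hHdDef, c.2]
    have h2 : ∀ c : {a : Fin p // a ∉ mi}, Hd j2 c.1 = H ⟨j2, hj2⟩ c := fun c => by
      simp [hHdDef, hj2, c.2]
    simp [h1, h2]
  have hL1 : ∀ (s : {q : Fin n × Fin p // q.1 = i0 ∧ q.2 ∈ mi})
      (a : {a : Fin n // a ≠ i0}) (j' : Fin p),
      L s ⟨(a.1, j'), fun h => a.2 h.1⟩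
        = e a * ((if j' = s.1.2 then 1 else 0) - Hd s.1.2 j') := by
    intro s a j'
    simp [hLDef, he'Def, a.2]
  have hL2 : ∀ (s : {q : Fin n × Fin p // q.1 = i0 ∧ q.2 ∈ mi})
      (j' : {j : Fin p // j ∉ mi}),
      L s ⟨(i0, j'.1), fun h => j'.2 h.2⟩ = H ⟨s.1.2, s.2.2⟩ j' := by
    intro s j'
    simp [hLDef, hHdDef, s.2.2, j'.2]
  -- core sum computation
  have hpart : ∀ (s : {q : Fin n × Fin p // q.1 = i0 ∧ q.2 ∈ mi}) (c1 : Fin n) (c2 : Fin p),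
      (∑ b : {q : Fin n × Fin p // ¬(q.1 = i0 ∧ q.2 ∈ mi)},
        L s b * (Sig b.1.1 c1 * Del b.1.2 c2))
        = (∑ a : {a : Fin n // a ≠ i0}, e a * Sig a.1 c1) *
            (Del s.1.2 c2 - ∑ j' : {j : Fin p // j ∉ mi}, H ⟨s.1.2, s.2.2⟩ j' * Del j'.1 c2)
          + Sig i0 c1 * ∑ j' : {j : Fin p // j ∉ mi}, H ⟨s.1.2, s.2.2⟩ j' * Del j'.1 c2 := by
    intro s c1 c2
    rw [sum_split_O i0 mi (fun b => L s b * (Sig b.1.1 c1 * Del b.1.2 c2))]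
    have hinner1 : ∀ a : {a : Fin n // a ≠ i0},
        (∑ j' : Fin p, L s ⟨(a.1, j'), fun h => a.2 h.1⟩ * (Sig a.1 c1 * Del j' c2))
          = (e a * Sig a.1 c1) *
            (Del s.1.2 c2 - ∑ j' : {j : Fin p // j ∉ mi}, H ⟨s.1.2, s.2.2⟩ j' * Del j'.1 c2) := by
      intro a
      have step1 : (∑ j' : Fin p, L s ⟨(a.1, j'), fun h => a.2 h.1⟩ * (Sig a.1 c1 * Del j' c2))
          = (e a * Sig a.1 c1) *
            ∑ j' : Fin p, ((if j' = s.1.2 then 1 else 0) - Hd s.1.2 j') * Del j' c2 := by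
        rw [Finset.mul_sum]
        refine Finset.sum_congr rfl fun j' _ => ?_
        rw [hL1]
        ring
      rw [step1]
      congr 1
      have step2 : (∑ j' : Fin p, ((if j' = s.1.2 then 1 else 0) - Hd s.1.2 j') * Del j' c2)
          = (∑ j' : Fin p, (if j' = s.1.2 then 1 else 0) * Del j' c2)
            - ∑ j' : Fin p, Hd s.1.2 j' * Del j' c2 := by
        rw [← Finset.sum_sub_distrib]
        refine Finset.sum_congr rfl fun j' _ => by ring
      rw [step2, hHdsum s.1.2 s.2.2 (fun j' => Del j' c2)]
      congr 1
      simp [ite_mul]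
    have hpart1 : (∑ a : {a : Fin n // a ≠ i0}, ∑ j' : Fin p,
        L s ⟨(a.1, j'), fun h => a.2 h.1⟩ * (Sig a.1 c1 * Del j' c2))
        = (∑ a : {a : Fin n // a ≠ i0}, e a * Sig a.1 c1) *
          (Del s.1.2 c2 - ∑ j' : {j : Fin p // j ∉ mi}, H ⟨s.1.2, s.2.2⟩ j' * Del j'.1 c2) := by
      rw [Finset.sum_mul]
      exact Finset.sum_congr rfl fun a _ => hinner1 a
    have hpart2 : (∑ j' : {j : Fin p // j ∉ mi},
        L s ⟨(i0, j'.1), fun h => j'.2 h.2⟩ * (Sig i0 c1 * Del j'.1 c2))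
        = Sig i0 c1 * ∑ j' : {j : Fin p // j ∉ mi}, H ⟨s.1.2, s.2.2⟩ j' * Del j'.1 c2 := by
      rw [Finset.mul_sum]
      refine Finset.sum_congr rfl fun j' _ => ?_
      rw [hL2]
      ring
    rw [hpart1, hpart2]
  -- L * OmOO = OmSO
  have hLOmOO : L * OmOO = OmSO := by
    ext s c
    rw [Matrix.mul_apply]
    have hterm : ∀ b : {q : Fin n × Fin p // ¬(q.1 = i0 ∧ q.2 ∈ mi)},
        L s b * OmOO b c = L s b * (Sig b.1.1 c.1.1 * Del b.1.2 c.1.2) := fun b => by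
      rw [hOmOO, hOm]
    have hRHS : OmSO s c = Sig i0 c.1.1 * Del s.1.2 c.1.2 := by
      rw [hOmSO, hOm]; rw [s.2.1]
    rw [Finset.sum_congr rfl fun b _ => hterm b, hpart s c.1.1 c.1.2, hRHS]
    by_cases hc : c.1.1 = i0
    · have hc2 : c.1.2 ∉ mi := fun hm => c.2 ⟨hc, hm⟩
      rw [hc]
      rw [hF2, hF3 ⟨s.1.2, s.2.2⟩ ⟨c.1.2, hc2⟩]
      ring
    · rw [hF1 ⟨c.1.1, hc⟩]
      ring
  have hL : OmSO * OmOO⁻¹ = L := by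
    rw [← hLOmOO, Matrix.mul_nonsing_inv_cancel_right _ _ hOmOOU]
  refine ⟨hγpos, hOmOOPD, ?_, ?_⟩
  · -- (a) mean
    intro q
    rw [mulVec_mulVec, mulVec_mulVec, hL, hGmoH]
    have hq1 : q.1.1 = i0 := q.2.1
    rw [show M q.1.1 q.1.2 = M i0 q.1.2 from by rw [q.2.1], hψ' q.1.2]
    have hLu : (L *ᵥ (fun b : {q : Fin n × Fin p // ¬(q.1 = i0 ∧ q.2 ∈ mi)} =>
          x b.1.1 b.1.2 - M b.1.1 b.1.2)) q
        = (∑ a : {a : Fin n // a ≠ i0}, e a * (x a.1 q.1.2 - M a.1 q.1.2))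
          - (∑ j' : {j : Fin p // j ∉ mi}, H ⟨q.1.2, q.2.2⟩ j' *
              (∑ a : {a : Fin n // a ≠ i0}, e a * (x a.1 j'.1 - M a.1 j'.1)))
          + ∑ j' : {j : Fin p // j ∉ mi}, H ⟨q.1.2, q.2.2⟩ j' * (x i0 j'.1 - M i0 j'.1) := by
      have hmv : (L *ᵥ (fun b : {q : Fin n × Fin p // ¬(q.1 = i0 ∧ q.2 ∈ mi)} =>
            x b.1.1 b.1.2 - M b.1.1 b.1.2)) q
          = ∑ b : {q : Fin n × Fin p // ¬(q.1 = i0 ∧ q.2 ∈ mi)},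
              L q b * (x b.1.1 b.1.2 - M b.1.1 b.1.2) := rfl
      rw [hmv, sum_split_O i0 mi (fun b => L q b * (x b.1.1 b.1.2 - M b.1.1 b.1.2))]
      have hinner : ∀ a : {a : Fin n // a ≠ i0},
          (∑ j' : Fin p, L q ⟨(a.1, j'), fun h => a.2 h.1⟩ * (x a.1 j' - M a.1 j'))
            = e a * (x a.1 q.1.2 - M a.1 q.1.2)
              - e a * ∑ j' : {j : Fin p // j ∉ mi}, H ⟨q.1.2, q.2.2⟩ j' *
                  (x a.1 j'.1 - M a.1 j'.1) := by
        intro a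
        have step1 : (∑ j' : Fin p, L q ⟨(a.1, j'), fun h => a.2 h.1⟩ * (x a.1 j' - M a.1 j'))
            = (∑ j' : Fin p, (if j' = q.1.2 then 1 else 0) * (e a * (x a.1 j' - M a.1 j')))
              - ∑ j' : Fin p, Hd q.1.2 j' * (e a * (x a.1 j' - M a.1 j')) := by
          rw [← Finset.sum_sub_distrib]
          refine Finset.sum_congr rfl fun j' _ => ?_
          rw [hL1]
          ring
        rw [step1, hHdsum q.1.2 q.2.2 (fun j' => e a * (x a.1 j' - M a.1 j'))]
        have step3 : (∑ j' : Fin p, (if j' = q.1.2 then 1 else 0) * (e a * (x a.1 j' - M a.1 j')))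
            = e a * (x a.1 q.1.2 - M a.1 q.1.2) := by
          simp [ite_mul]
        rw [step3, Finset.mul_sum]
        congr 1
        refine Finset.sum_congr rfl fun j' _ => by ring
      have hpartA : (∑ a : {a : Fin n // a ≠ i0}, ∑ j' : Fin p,
          L q ⟨(a.1, j'), fun h => a.2 h.1⟩ * (x a.1 j' - M a.1 j'))
          = (∑ a : {a : Fin n // a ≠ i0}, e a * (x a.1 q.1.2 - M a.1 q.1.2))
            - ∑ j' : {j : Fin p // j ∉ mi}, H ⟨q.1.2, q.2.2⟩ j' *
                (∑ a : {a : Fin n // a ≠ i0}, e a * (x a.1 j'.1 - M a.1 j'.1)) := by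
        rw [Finset.sum_congr rfl fun a _ => hinner a, Finset.sum_sub_distrib]
        congr 1
        have hswap : (∑ a : {a : Fin n // a ≠ i0}, e a *
            ∑ j' : {j : Fin p // j ∉ mi}, H ⟨q.1.2, q.2.2⟩ j' * (x a.1 j'.1 - M a.1 j'.1))
            = ∑ j' : {j : Fin p // j ∉ mi}, H ⟨q.1.2, q.2.2⟩ j' *
                ∑ a : {a : Fin n // a ≠ i0}, e a * (x a.1 j'.1 - M a.1 j'.1) := by
          simp_rw [Finset.mul_sum]
          rw [Finset.sum_comm]
          exact Finset.sum_congr rfl fun j' _ => Finset.sum_congr rfl fun a _ => by ring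
        exact hswap
      have hpartB : (∑ j' : {j : Fin p // j ∉ mi},
          L q ⟨(i0, j'.1), fun h => j'.2 h.2⟩ * (x i0 j'.1 - M i0 j'.1))
          = ∑ j' : {j : Fin p // j ∉ mi}, H ⟨q.1.2, q.2.2⟩ j' * (x i0 j'.1 - M i0 j'.1) := by
        refine Finset.sum_congr rfl fun j' _ => ?_
        rw [hL2]
      rw [hpartA, hpartB]
    have hHv : (H *ᵥ (fun j : {j : Fin p // j ∉ mi} => x i0 j.1 - ψ j.1)) ⟨q.1.2, q.2.2⟩
        = ∑ j' : {j : Fin p // j ∉ mi}, H ⟨q.1.2, q.2.2⟩ j' *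
            ((x i0 j'.1 - M i0 j'.1) -
              ∑ a : {a : Fin n // a ≠ i0}, e a * (x a.1 j'.1 - M a.1 j'.1)) := by
      have hmv : (H *ᵥ (fun j : {j : Fin p // j ∉ mi} => x i0 j.1 - ψ j.1)) ⟨q.1.2, q.2.2⟩
          = ∑ j' : {j : Fin p // j ∉ mi}, H ⟨q.1.2, q.2.2⟩ j' * (x i0 j'.1 - ψ j'.1) := rfl
      rw [hmv]
      refine Finset.sum_congr rfl fun j' _ => ?_
      rw [hψ' j'.1]
      ring
    rw [hLu, hHv]
    simp only [mul_sub, sub_mul, Finset.sum_sub_distrib]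
    ring
  · -- (b) covariance
    intro a b
    rw [hL, hGmoH]
    rw [Matrix.sub_apply, Matrix.sub_apply, Matrix.mul_apply, Matrix.mul_apply]
    have hterm : ∀ b' : {q : Fin n × Fin p // ¬(q.1 = i0 ∧ q.2 ∈ mi)},
        L a b' * OmOS b' b = L a b' * (Sig b'.1.1 i0 * Del b'.1.2 b.1.2) := fun b' => by
      rw [hOmOS, hOm, b.2.1]
    rw [Finset.sum_congr rfl fun b' _ => hterm b', hpart a i0 b.1.2, hF2]
    rw [show OmSS a b = Sig i0 i0 * Del a.1.2 b.1.2 from by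
      rw [hOmSS, hOm]; rw [a.2.1, b.2.1]]
    have hterm2 : ∀ j' : {j : Fin p // j ∉ mi},
        H ⟨a.1.2, a.2.2⟩ j' * Gom j' ⟨b.1.2, b.2.2⟩
          = γ * (H ⟨a.1.2, a.2.2⟩ j' * Del j'.1 b.1.2) := fun j' => by
      rw [hGom, hΓ]
      simp [Matrix.smul_apply]
      ring
    rw [Finset.sum_congr rfl fun j' _ => hterm2 j', ← Finset.mul_sum]
    rw [hGmm, hΓ]
    simp only [Matrix.smul_apply, smul_eq_mul]
    ring
end

section
/- Let Σ ∈ ℝ^{n×n} and Δ ∈ ℝ^{p×p} be symmetric positive definite, Ω = Δ⊗Σ (so Ω is positive definite on ℝ^{np} indexed by pairs (i,j)), μ ∈ ℝ^{np}, and let the index set {1,…,n}×{1,…,p} be partitioned into a missing set m and observed set o, with m_i = {j : (i,j) ∈ m} the missing entries of row i and m_j = {i : (i,j) ∈ m} those of column j. Fix x_o ∈ ℝ^{o} and let f(z) = (v − μ)ᵀΩ⁻¹(v − μ) for z ∈ ℝ^{m}, where v agrees with z on m and with x_o on o. Consider the Alternating Conditional Expectations iteration: starting from any z⁽⁰⁾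 ∈ ℝ^{m}, each iteration first cycles through the rows i = 1,…,n, replacing the block of coordinates {i}×m_i of the current iterate by the unique minimizer of f over that block with all other coordinates held fixed (equivalently, by the Gaussian conditional mean of X_{i,m_i} given all other current values), and then cycles through the columns j = 1,…,p, doing the same for the blocks m_j×{j}. Then the sequence of iterates z⁽ᵏ⁾ converges as k → ∞ to z* = μ_m + Ω_{m,o}·Ω_{o,o}⁻¹·(x_o − μ_o), the conditional expectation E(X_m | X_o = x_o) for vec(X) ~ N(μ, Ω). -/
set_option linter.unusedSectionVars false
set_option linter.unusedVariables false
set_option maxHeartbeats 1000000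

open Matrix Filter Topology Kronecker

namespace ACEAux




variable {N : Type*} [Fintype N]

lemma sum_eq_sum_subtype (P : N → Prop) [DecidablePred P] [Fintype (Subtype P)] (F : N → ℝ)
    (hF : ∀ q, ¬ P q → F q = 0) : ∑ q : N, F q = ∑ a : Subtype P, F a.1 := by
  classical
  rw [← Finset.sum_filter_of_ne (s := Finset.univ) (p := P)
    (fun q _ h => by by_contra hP; exact h (hF q hP))]
  exact Finset.sum_subtype _ (by simp) _

noncomputable def extVec (P : N → Prop) [DecidablePred P] (y : Subtype P → ℝ) : N → ℝ :=
  fun q => if h : P q then y ⟨q, h⟩ else 0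

lemma extVec_apply (P : N → Prop) [DecidablePred P] (y : Subtype P → ℝ) (a : Subtype P) :
    extVec P y a.1 = y a := by
  simp [extVec, a.2]

lemma extVec_dot (P : N → Prop) [DecidablePred P] [Fintype (Subtype P)] (y : Subtype P → ℝ) (u : N → ℝ) :
    extVec P y ⬝ᵥ u = ∑ a : Subtype P, y a * u a.1 := by
  rw [dotProduct, sum_eq_sum_subtype P (fun q => extVec P y q * u q)
    (fun q hq => by simp [extVec, dif_neg hq])]
  exact Finset.sum_congr rfl fun a _ => by rw [extVec_apply]

lemma mulVec_extVec (P : N → Prop) [DecidablePred P] [Fintype (Subtype P)] (M : Matrix N N ℝ)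
    (y : Subtype P → ℝ) (q : N) :
    (M *ᵥ extVec P y) q = ∑ a : Subtype P, M q a.1 * y a := by
  show (fun j => M q j) ⬝ᵥ extVec P y = _
  rw [dotProduct, sum_eq_sum_subtype P (fun q' => M q q' * extVec P y q')
    (fun q' hq' => by simp [extVec, dif_neg hq'])]
  exact Finset.sum_congr rfl fun a _ => by rw [extVec_apply]

lemma extVec_dot_mulVec (P : N → Prop) [DecidablePred P] [Fintype (Subtype P)] (M : Matrix N N ℝ)
    (x y : Subtype P → ℝ) :
    extVec P x ⬝ᵥ (M *ᵥ extVec P y)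
      = x ⬝ᵥ ((Matrix.of fun a b : Subtype P => M a.1 b.1) *ᵥ y) := by
  rw [extVec_dot]
  refine Finset.sum_congr rfl fun a _ => ?_
  rw [mulVec_extVec]
  rfl

lemma extVec_ne_zero (P : N → Prop) [DecidablePred P] {y : Subtype P → ℝ} (hy : y ≠ 0) :
    extVec P y ≠ 0 := by
  obtain ⟨a, ha⟩ := Function.ne_iff.1 hy
  intro h
  exact ha (by simpa [extVec_apply] using congrFun h a.1)

lemma posDef_sub (P : N → Prop) [DecidablePred P] [Fintype (Subtype P)] (M : Matrix N N ℝ) (hM : M.PosDef) :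
    Matrix.PosDef (Matrix.of fun a b : Subtype P => M a.1 b.1) := by
  refine PosDef.of_dotProduct_mulVec_pos ?_ ?_
  · ext a b
    simpa [Matrix.conjTranspose_apply] using congrFun (congrFun hM.1 a.1) b.1
  · intro x hx
    have h := hM.dotProduct_mulVec_pos (extVec_ne_zero P hx)
    rw [star_trivial] at h ⊢
    rwa [extVec_dot_mulVec] at h



lemma posDef_kron {n p : ℕ}
    (Sig : Matrix (Fin n) (Fin n) ℝ) (Del : Matrix (Fin p) (Fin p) ℝ)
    (hSig : Sig.PosDef) (hDel : Del.PosDef)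
    (Om : Matrix (Fin n × Fin p) (Fin n × Fin p) ℝ)
    (hOm : ∀ q q' : Fin n × Fin p, Om q q' = Sig q.1 q'.1 * Del q.2 q'.2) :
    Om.PosDef := by
  classical
  have hOmk : Om = Sig ⊗ₖ Del := by
    ext q q'
    rw [hOm q q']
    rfl
  rw [hOmk]
  exact hSig.kronecker hDel



variable {ι : Type*} [Fintype ι] [DecidableEq ι]

lemma dot_sym {A : Matrix ι ι ℝ} (hA : Aᵀ = A) (x y : ι → ℝ) :
    x ⬝ᵥ (A *ᵥ y) = y ⬝ᵥ (A *ᵥ x) := by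
  rw [dotProduct_mulVec, ← mulVec_transpose, hA, dotProduct_comm]

lemma qf_add {A : Matrix ι ι ℝ} (hA : Aᵀ = A) (x y : ι → ℝ) :
    (x + y) ⬝ᵥ (A *ᵥ (x + y))
      = x ⬝ᵥ (A *ᵥ x) + 2 * (y ⬝ᵥ (A *ᵥ x)) + y ⬝ᵥ (A *ᵥ y) := by
  simp only [mulVec_add, dotProduct_add, add_dotProduct]
  rw [dot_sym hA x y]
  ring

/-- difference-form key identity for a block step -/
lemma diff_identity {A : Matrix ι ι ℝ} (hA : Aᵀ = A) (Q : ι → Prop)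
    (d e : ι → ℝ) (hoff : ∀ a, ¬ Q a → e a = d a)
    (hgrad : ∀ a, Q a → (A *ᵥ e) a = 0) :
    d ⬝ᵥ (A *ᵥ d) = e ⬝ᵥ (A *ᵥ e) + (d - e) ⬝ᵥ (A *ᵥ (d - e)) := by
  have hd : d = e + (d - e) := by abel
  have hcross : (d - e) ⬝ᵥ (A *ᵥ e) = 0 := by
    rw [dotProduct]
    refine Finset.sum_eq_zero fun a _ => ?_
    by_cases hQ : Q a
    · rw [hgrad a hQ, mul_zero]
    · have : e a = d a := hoff a hQ
      simp [Pi.sub_apply, this]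
  calc d ⬝ᵥ (A *ᵥ d) = (e + (d - e)) ⬝ᵥ (A *ᵥ (e + (d - e))) := by rw [← hd]
    _ = e ⬝ᵥ (A *ᵥ e) + 2 * ((d - e) ⬝ᵥ (A *ᵥ e)) + (d - e) ⬝ᵥ (A *ᵥ (d - e)) := qf_add hA _ _
    _ = _ := by rw [hcross]; ring

lemma diff_uniq {A : Matrix ι ι ℝ} (hA : A.PosDef) (Q : ι → Prop)
    (d e e' : ι → ℝ)
    (hoff : ∀ a, ¬ Q a → e a = d a) (hgrad : ∀ a, Q a → (A *ᵥ e) a = 0)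
    (hoff' : ∀ a, ¬ Q a → e' a = d a) (hgrad' : ∀ a, Q a → (A *ᵥ e') a = 0) :
    e = e' := by
  have hz : (e - e') ⬝ᵥ (A *ᵥ (e - e')) = 0 := by
    rw [mulVec_sub, dotProduct_sub]
    have h1 : (e - e') ⬝ᵥ (A *ᵥ e) = 0 := by
      rw [dotProduct]
      refine Finset.sum_eq_zero fun a _ => ?_
      by_cases hQ : Q a
      · rw [hgrad a hQ, mul_zero]
      · simp [Pi.sub_apply, hoff a hQ, hoff' a hQ]
    have h2 : (e - e') ⬝ᵥ (A *ᵥ e') = 0 := by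
      rw [dotProduct]
      refine Finset.sum_eq_zero fun a _ => ?_
      by_cases hQ : Q a
      · rw [hgrad' a hQ, mul_zero]
      · simp [Pi.sub_apply, hoff a hQ, hoff' a hQ]
    rw [h1, h2, sub_zero]
  by_contra hne
  have : e - e' ≠ 0 := sub_ne_zero.mpr hne
  have := hA.dotProduct_mulVec_pos this
  rw [star_trivial, hz] at this
  exact lt_irrefl 0 this

/-- linearity of an exact block step, from its characterization -/
lemma step_lin {A : Matrix ι ι ℝ} (hA : A.PosDef) (Q : ι → Prop)
    (S : (ι → ℝ) → (ι → ℝ))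
    (hoff : ∀ d a, ¬ Q a → S d a = d a)
    (hgrad : ∀ d a, Q a → (A *ᵥ S d) a = 0)
    (c : ℝ) (d d' : ι → ℝ) :
    S (c • d + d') = c • S d + S d' := by
  refine diff_uniq hA Q (c • d + d') _ _ (hoff _) (hgrad _) ?_ ?_
  · intro a ha
    simp [Pi.smul_apply, Pi.add_apply, hoff d a ha, hoff d' a ha]
  · intro a ha
    rw [mulVec_add, mulVec_smul]
    simp [hgrad d a ha, hgrad d' a ha]

section sweep

lemma fold_lin {A : Matrix ι ι ℝ} (hA : A.PosDef) {κ : Type*} (Q : κ → ι → Prop) (S : κ → (ι → ℝ) → (ι → ℝ))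
    (hoff : ∀ i d a, ¬ Q i a → S i d a = d a)
    (hgrad : ∀ i d a, Q i a → (A *ᵥ S i d) a = 0)
    (l : List κ) (c : ℝ) (d d' : ι → ℝ) :
    l.foldl (fun u i => S i u) (c • d + d')
      = c • l.foldl (fun u i => S i u) d + l.foldl (fun u i => S i u) d' := by
  induction l generalizing d d' with
  | nil => rfl
  | cons i l ih =>
    simp only [List.foldl_cons]
    rw [step_lin hA (Q i) (S i) (hoff i) (hgrad i) c d d', ih]

lemma fold_mono {A : Matrix ι ι ℝ} (hA : A.PosDef) {κ : Type*} (Q : κ → ι → Prop) (S : κ → (ι → ℝ) → (ι → ℝ))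
    (hoff : ∀ i d a, ¬ Q i a → S i d a = d a)
    (hgrad : ∀ i d a, Q i a → (A *ᵥ S i d) a = 0)
    (l : List κ) (d : ι → ℝ) :
    (l.foldl (fun u i => S i u) d) ⬝ᵥ (A *ᵥ l.foldl (fun u i => S i u) d)
      ≤ d ⬝ᵥ (A *ᵥ d) := by
  have hAs : Aᵀ = A := by
    rw [← conjTranspose_eq_transpose_of_trivial]; exact hA.1
  induction l generalizing d with
  | nil => exact le_refl _
  | cons i l ih =>
    simp only [List.foldl_cons]
    refine le_trans (ih (S i d)) ?_
    have h0 : ∀ y : ι → ℝ, 0 ≤ y ⬝ᵥ (A *ᵥ y) := fun y => by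
      simpa using hA.posSemidef.dotProduct_mulVec_nonneg y
    have := diff_identity hAs (Q i) d (S i d) (hoff i d) (hgrad i d)
    linarith [h0 (d - S i d)]

lemma fold_eq_case {A : Matrix ι ι ℝ} (hA : A.PosDef) {κ : Type*} (Q : κ → ι → Prop) (S : κ → (ι → ℝ) → (ι → ℝ))
    (hoff : ∀ i d a, ¬ Q i a → S i d a = d a)
    (hgrad : ∀ i d a, Q i a → (A *ᵥ S i d) a = 0)
    (l : List κ) (d : ι → ℝ)
    (heq : (l.foldl (fun u i => S i u) d) ⬝ᵥ (A *ᵥ l.foldl (fun u i => S i u) d)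
      = d ⬝ᵥ (A *ᵥ d)) :
    l.foldl (fun u i => S i u) d = d ∧ ∀ i ∈ l, ∀ a, Q i a → (A *ᵥ d) a = 0 := by
  have hAs : Aᵀ = A := by
    rw [← conjTranspose_eq_transpose_of_trivial]; exact hA.1
  have h0 : ∀ y : ι → ℝ, 0 ≤ y ⬝ᵥ (A *ᵥ y) := fun y => by
    simpa using hA.posSemidef.dotProduct_mulVec_nonneg y
  have hz : ∀ y : ι → ℝ, y ⬝ᵥ (A *ᵥ y) = 0 → y = 0 := by
    intro y hy
    by_contra hne
    have := hA.dotProduct_mulVec_pos hne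
    rw [star_trivial, hy] at this
    exact lt_irrefl 0 this
  induction l generalizing d with
  | nil => exact ⟨rfl, by simp⟩
  | cons i l ih =>
    simp only [List.foldl_cons] at heq ⊢
    have h1 : (l.foldl (fun u i => S i u) (S i d)) ⬝ᵥ
        (A *ᵥ l.foldl (fun u i => S i u) (S i d)) ≤ (S i d) ⬝ᵥ (A *ᵥ S i d) :=
      fold_mono hA Q S hoff hgrad l (S i d)
    have hkey := diff_identity hAs (Q i) d (S i d) (hoff i d) (hgrad i d)
    have h2 : (S i d) ⬝ᵥ (A *ᵥ S i d) = d ⬝ᵥ (A *ᵥ d) := by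
      have := h0 (d - S i d)
      have h3 : (S i d) ⬝ᵥ (A *ᵥ S i d) ≤ d ⬝ᵥ (A *ᵥ d) := by linarith
      linarith [le_antisymm h3 (heq ▸ h1)]
    have hfix : S i d = d := by
      have hdz : (d - S i d) ⬝ᵥ (A *ᵥ (d - S i d)) = 0 := by linarith
      have := hz _ hdz
      have := sub_eq_zero.mp this
      exact this.symm
    rw [hfix] at heq
    obtain ⟨hfold, hrest⟩ := ih d heq
    refine ⟨by rw [hfix, hfold], ?_⟩
    intro j hj a ha
    rcases List.mem_cons.mp hj with h | h
    · subst h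
      have := hgrad j d a ha
      rwa [hfix] at this
    · exact hrest j h a ha

end sweep



lemma dot_sym' {ι : Type*} [Fintype ι] {A : Matrix ι ι ℝ} (hA : Aᵀ = A) (x y : ι → ℝ) :
    x ⬝ᵥ (A *ᵥ y) = y ⬝ᵥ (A *ᵥ x) := by
  rw [dotProduct_mulVec, ← mulVec_transpose, hA, dotProduct_comm]

lemma qf_add' {ι : Type*} [Fintype ι] {A : Matrix ι ι ℝ} (hA : Aᵀ = A) (x y : ι → ℝ) :
    (x + y) ⬝ᵥ (A *ᵥ (x + y))
      = x ⬝ᵥ (A *ᵥ x) + 2 * (y ⬝ᵥ (A *ᵥ x)) + y ⬝ᵥ (A *ᵥ y) := by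
  simp only [mulVec_add, dotProduct_add, add_dotProduct]
  rw [dot_sym' hA x y]
  ring

lemma grad_of_min {ι : Type*} [Fintype ι] [DecidableEq ι] {A : Matrix ι ι ℝ} (hA : A.PosDef)
    (zstar : ι → ℝ) (f : (ι → ℝ) → ℝ)
    (hdecomp : ∀ u, f u = f zstar + (u - zstar) ⬝ᵥ (A *ᵥ (u - zstar)))
    (Q : ι → Prop) (w u : ι → ℝ)
    (hoff : ∀ a, ¬ Q a → u a = w a)
    (hmin : ∀ u', (∀ a, ¬ Q a → u' a = w a) → f u ≤ f u')
    (a : ι) (ha : Q a) : (A *ᵥ (u - zstar)) a = 0 := by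
  have hAs : Aᵀ = A := by
    rw [← conjTranspose_eq_transpose_of_trivial]; exact hA.1
  set g := (A *ᵥ (u - zstar)) a with hg
  have hsingle_ne : (Pi.single a 1 : ι → ℝ) ≠ 0 := by
    intro h
    have := congrFun h a
    simp at this
  have hca : 0 < A a a := by
    have h := hA.dotProduct_mulVec_pos hsingle_ne
    rw [star_trivial] at h
    simpa [single_dotProduct, mulVec_single] using h
  have key : ∀ t : ℝ, 0 ≤ 2 * (t * g) + t ^ 2 * A a a := by
    intro t
    have h1 := hmin (u + t • (Pi.single a 1 : ι → ℝ)) (fun b hb => by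
      have hba : b ≠ a := fun h => hb (h ▸ ha)
      simp [Pi.single_eq_of_ne hba, hoff b hb])
    rw [hdecomp u, hdecomp (u + t • (Pi.single a 1 : ι → ℝ))] at h1
    have h2 : u + t • (Pi.single a 1 : ι → ℝ) - zstar = (u - zstar) + t • (Pi.single a 1 : ι → ℝ) := by abel
    rw [h2, qf_add' hAs] at h1
    have h3 : (t • (Pi.single a 1 : ι → ℝ)) ⬝ᵥ (A *ᵥ (u - zstar)) = t * g := by
      rw [smul_dotProduct, single_dotProduct]
      simp [hg, smul_eq_mul]
    have h4 : (t • (Pi.single a 1 : ι → ℝ)) ⬝ᵥ (A *ᵥ (t • (Pi.single a 1 : ι → ℝ))) = t ^ 2 * A a a := by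
      rw [mulVec_smul, smul_dotProduct, dotProduct_smul, single_dotProduct, mulVec_single_one]
      simp only [smul_eq_mul, one_mul, mul_one, sq, col_apply, transpose_apply]
      ring
    rw [h3, h4] at h1
    linarith
  have h := key (-(g / A a a))
  have he : 2 * ((-(g / A a a)) * g) + (-(g / A a a)) ^ 2 * A a a = -(g ^ 2 / A a a) := by
    field_simp
    ring
  rw [he] at h
  have h5 : g ^ 2 / A a a ≤ 0 := by linarith
  have h6 : g ^ 2 = (g ^ 2 / A a a) * A a a := by field_simp
  have h7 : g ^ 2 ≤ 0 := by rw [h6]; exact mul_nonpos_of_nonpos_of_nonneg h5 hca.le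
  have h8 : g ^ 2 = 0 := le_antisymm h7 (sq_nonneg g)
  exact pow_eq_zero_iff (by norm_num) |>.mp h8



lemma core_tendsto {ι : Type*} [Fintype ι] [DecidableEq ι]
    (A : Matrix ι ι ℝ) (hA : A.PosDef)
    (L : (ι → ℝ) → (ι → ℝ))
    (hL : ∀ (c : ℝ) (x y : ι → ℝ), L (c • x + y) = c • L x + L y)
    (hmono : ∀ x : ι → ℝ, (L x) ⬝ᵥ (A *ᵥ L x) ≤ x ⬝ᵥ (A *ᵥ x))
    (hstrict : ∀ x : ι → ℝ, x ≠ 0 → (L x) ⬝ᵥ (A *ᵥ L x) < x ⬝ᵥ (A *ᵥ x))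
    (d : ℕ → ι → ℝ) (hd : ∀ k, d (k + 1) = L (d k)) :
    Tendsto d atTop (𝓝 0) := by
  classical
  set D : (ι → ℝ) → ℝ := fun x => x ⬝ᵥ (A *ᵥ x) with hDdef
  have hD0 : ∀ x, 0 ≤ D x := fun x => by
    simpa [hDdef] using hA.posSemidef.dotProduct_mulVec_nonneg x
  have hDpos : ∀ x, x ≠ 0 → 0 < D x := fun x hx => by
    simpa [hDdef] using hA.dotProduct_mulVec_pos hx
  have hL0 : L 0 = 0 := by
    have h2 : L 0 + L 0 = L 0 := by simpa using (hL 1 0 0).symm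
    exact add_eq_left.mp h2
  have hLsmul : ∀ (c : ℝ) x, L (c • x) = c • L x := fun c x => by
    simpa [hL0] using hL c x 0
  have hDsmul : ∀ (c : ℝ) x, D (c • x) = c ^ 2 * D x := fun c x => by
    simp [hDdef, mulVec_smul, dotProduct_smul, smul_dotProduct, smul_eq_mul, sq]
    ring
  have hDcont : Continuous D := by
    have : D = fun x : ι → ℝ => ∑ i, x i * ∑ j, A i j * x j := by
      funext x; simp [hDdef, dotProduct, mulVec]
    rw [this]
    exact continuous_finset_sum _ fun i _ => (continuous_apply i).mul
      (continuous_finset_sum _ fun j _ => continuous_const.mul (continuous_apply j))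
  have hLcont : Continuous L := by
    let Ll : (ι → ℝ) →ₗ[ℝ] (ι → ℝ) :=
      { toFun := L
        map_add' := fun x y => by simpa using hL 1 x y
        map_smul' := fun c x => by simpa using hLsmul c x }
    exact Ll.continuous_of_finiteDimensional
  by_cases hι : Nonempty ι
  · -- main case
    have hsph : IsCompact (Metric.sphere (0 : ι → ℝ) 1) := isCompact_sphere 0 1
    have hsne : (Metric.sphere (0 : ι → ℝ) 1).Nonempty := by
      have : Nontrivial (ι → ℝ) := Function.nontrivial
      obtain ⟨x, hx⟩ := exists_norm_eq (ι → ℝ) (zero_le_one)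
      exact ⟨x, by simpa [Metric.mem_sphere, dist_zero_right] using hx⟩
    have hmemne : ∀ x ∈ Metric.sphere (0 : ι → ℝ) 1, x ≠ 0 := fun x hx => by
      intro h
      rw [Metric.mem_sphere, dist_zero_right, h, norm_zero] at hx
      norm_num at hx
    -- coercivity
    obtain ⟨xm, hxmmem, hxmmin⟩ := hsph.exists_isMinOn hsne hDcont.continuousOn
    set ε := D xm with hεdef
    have hε : 0 < ε := hDpos xm (hmemne xm hxmmem)
    have hcoer : ∀ x, ε * ‖x‖ ^ 2 ≤ D x := by
      intro x
      by_cases hx : x = 0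
      · simp [hx, hDdef]
    
      · have hnx : 0 < ‖x‖ := norm_pos_iff.mpr hx
        have hy : (‖x‖⁻¹ • x) ∈ Metric.sphere (0 : ι → ℝ) 1 := by
          simp [Metric.mem_sphere, dist_zero_right, norm_smul, abs_of_pos (inv_pos.mpr hnx),
            inv_mul_cancel₀ hnx.ne']
        have h1 : ε ≤ D (‖x‖⁻¹ • x) := hxmmin hy
        rw [hDsmul] at h1
        have h2 : (‖x‖⁻¹) ^ 2 * D x = D x / ‖x‖ ^ 2 := by
          field_simp
        rw [h2, le_div_iff₀ (by positivity)] at h1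
        exact h1
    -- contraction factor
    set φ : (ι → ℝ) → ℝ := fun x => D (L x) / D x with hφdef
    have hφcont : ContinuousOn φ (Metric.sphere (0 : ι → ℝ) 1) :=
      ((hDcont.comp hLcont).continuousOn).div hDcont.continuousOn
        (fun x hx => (hDpos x (hmemne x hx)).ne')
    obtain ⟨x0, hx0mem, hx0max⟩ := hsph.exists_isMaxOn hsne hφcont
    set r := φ x0 with hrdef
    have hr0 : 0 ≤ r := div_nonneg (hD0 _) (hD0 _)
    have hr1 : r < 1 := by
      rw [hrdef, hφdef]
      exact (div_lt_one (hDpos x0 (hmemne x0 hx0mem))).mpr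
        (hstrict x0 (hmemne x0 hx0mem))
    have hbound : ∀ x, D (L x) ≤ r * D x := by
      intro x
      by_cases hx : x = 0
      · simp [hx, hL0, hDdef]
      · have hnx : 0 < ‖x‖ := norm_pos_iff.mpr hx
        have hy : (‖x‖⁻¹ • x) ∈ Metric.sphere (0 : ι → ℝ) 1 := by
          simp [Metric.mem_sphere, dist_zero_right, norm_smul, abs_of_pos (inv_pos.mpr hnx),
            inv_mul_cancel₀ hnx.ne']
        have h1 : φ (‖x‖⁻¹ • x) ≤ r := hx0max hy
        have h2 : φ (‖x‖⁻¹ • x) = D (L x) / D x := by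
          rw [hφdef]
          simp only [hLsmul, hDsmul]
          rw [mul_div_mul_left _ _ (by positivity : ((‖x‖⁻¹) ^ 2 : ℝ) ≠ 0)]
        rw [h2, div_le_iff₀ (hDpos x hx)] at h1
        linarith [h1]
    have hiter : ∀ k, D (d k) ≤ r ^ k * D (d 0) := by
      intro k
      induction k with
      | zero => simp
      | succ k ih =>
        calc D (d (k + 1)) = D (L (d k)) := by rw [hd k]
          _ ≤ r * D (d k) := hbound _
          _ ≤ r * (r ^ k * D (d 0)) := mul_le_mul_of_nonneg_left ih hr0
          _ = r ^ (k + 1) * D (d 0) := by ring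
    have hnormsq : ∀ k, ‖d k‖ ^ 2 ≤ r ^ k * (D (d 0) / ε) := by
      intro k
      have h1 := hcoer (d k)
      have h2 := hiter k
      rw [← le_div_iff₀' hε] at h1
      calc ‖d k‖ ^ 2 ≤ D (d k) / ε := h1
        _ ≤ r ^ k * D (d 0) / ε := by gcongr
        _ = r ^ k * (D (d 0) / ε) := by ring
    have hlim : Tendsto (fun k => r ^ k * (D (d 0) / ε)) atTop (𝓝 0) := by
      simpa using (tendsto_pow_atTop_nhds_zero_of_lt_one hr0 hr1).mul_const (D (d 0) / ε)
    have hsq : Tendsto (fun k => ‖d k‖ ^ 2) atTop (𝓝 0) :=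
      squeeze_zero (fun k => sq_nonneg _) hnormsq hlim
    have hnrm : Tendsto (fun k => ‖d k‖) atTop (𝓝 0) := by
      have := (Real.continuous_sqrt.tendsto 0).comp hsq
      simpa [Function.comp_def, Real.sqrt_sq, norm_nonneg] using this
    exact tendsto_zero_iff_norm_tendsto_zero.mpr hnrm
  · -- empty index type
    have : d = fun _ => 0 := funext fun k => funext fun a => absurd ⟨a⟩ hι
    rw [this]
    exact tendsto_const_nhds


end ACEAux


/-- **Theorem 3: Alternating Conditional Expectations.**
For `Ω = Δ⊗Σ` positive definite (Σ, Δ symmetric positive definite), mean `μ`, a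
partition of the entries into missing set `m` and observed set `o` with observed
values `x_o`, and the Gaussian quadratic form `f`, the alternating iteration that in
each sweep cycles through the rows and then through the columns, replacing each
row-block `{i}×m_i` (resp. column-block `m_j×{j}`) of the current iterate by the
unique minimizer of `f` over that block with all other coordinates held fixed,
converges to the Gaussian conditional mean `z* = μ_m + Ω_{m,o}Ω_{o,o}⁻¹(x_o − μ_o)`. -/
theorem alternating_conditional_expectations_converges
    (n p : ℕ)
    (Sig : Matrix (Fin n) (Fin n) ℝ) (Del : Matrix (Fin p) (Fin p) ℝ)
    (hSig : Sig.PosDef) (hDel : Del.PosDef)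
    (Om : Matrix (Fin n × Fin p) (Fin n × Fin p) ℝ)
    (hOm : ∀ q q' : Fin n × Fin p, Om q q' = Sig q.1 q'.1 * Del q.2 q'.2)
    (μ : Fin n × Fin p → ℝ)
    (m : Finset (Fin n × Fin p))
    (xo : {q : Fin n × Fin p // q ∉ m} → ℝ)
    (v : ({q : Fin n × Fin p // q ∈ m} → ℝ) → Fin n × Fin p → ℝ)
    (hv : ∀ z q, v z q = if h : q ∈ m then z ⟨q, h⟩ else xo ⟨q, h⟩)
    (f : ({q : Fin n × Fin p // q ∈ m} → ℝ) → ℝ)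
    (hf : ∀ z, f z = (fun q => v z q - μ q) ⬝ᵥ (Om⁻¹ *ᵥ fun q => v z q - μ q))
    -- row-block and column-block exact minimization steps
    (Rstep : Fin n → ({q : Fin n × Fin p // q ∈ m} → ℝ) →
      ({q : Fin n × Fin p // q ∈ m} → ℝ))
    (hR : ∀ (i : Fin n) (w : {q : Fin n × Fin p // q ∈ m} → ℝ),
      (∀ a : {q : Fin n × Fin p // q ∈ m}, a.1.1 ≠ i → Rstep i w a = w a) ∧
      (∀ u : {q : Fin n × Fin p // q ∈ m} → ℝ,
        (∀ a : {q : Fin n × Fin p // q ∈ m}, a.1.1 ≠ i → u a = w a) →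
        f (Rstep i w) ≤ f u))
    (Cstep : Fin p → ({q : Fin n × Fin p // q ∈ m} → ℝ) →
      ({q : Fin n × Fin p // q ∈ m} → ℝ))
    (hC : ∀ (j : Fin p) (w : {q : Fin n × Fin p // q ∈ m} → ℝ),
      (∀ a : {q : Fin n × Fin p // q ∈ m}, a.1.2 ≠ j → Cstep j w a = w a) ∧
      (∀ u : {q : Fin n × Fin p // q ∈ m} → ℝ,
        (∀ a : {q : Fin n × Fin p // q ∈ m}, a.1.2 ≠ j → u a = w a) →
        f (Cstep j w) ≤ f u))
    -- the iterates: each sweep cycles through all rows, then all columns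
    (z : ℕ → ({q : Fin n × Fin p // q ∈ m} → ℝ))
    (hz : ∀ k, z (k + 1) =
      (List.finRange p).foldl (fun u j => Cstep j u)
        ((List.finRange n).foldl (fun u i => Rstep i u) (z k)))
    -- the Gaussian conditional mean
    (Omo : Matrix {q : Fin n × Fin p // q ∈ m} {q : Fin n × Fin p // q ∉ m} ℝ)
    (hOmo : ∀ a b, Omo a b = Om a.1 b.1)
    (Ooo : Matrix {q : Fin n × Fin p // q ∉ m} {q : Fin n × Fin p // q ∉ m} ℝ)
    (hOoo : ∀ a b, Ooo a b = Om a.1 b.1)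
    (zstar : {q : Fin n × Fin p // q ∈ m} → ℝ)
    (hzstar : ∀ a, zstar a = μ a.1 +
      (Omo *ᵥ (Ooo⁻¹ *ᵥ fun b : {q : Fin n × Fin p // q ∉ m} => xo b - μ b.1)) a) :
    Tendsto z atTop (𝓝 zstar) := by
  classical
  have hOmPD : Om.PosDef := ACEAux.posDef_kron Sig Del hSig hDel Om hOm
  have hOmdet : IsUnit Om.det := hOmPD.det_pos.ne'.isUnit
  set B : Matrix (Fin n × Fin p) (Fin n × Fin p) ℝ := Om⁻¹ with hBdef
  have hBPD : B.PosDef := hOmPD.inv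
  have hBs : Bᵀ = B := by
    rw [← conjTranspose_eq_transpose_of_trivial]; exact hBPD.1
  set A : Matrix {q : Fin n × Fin p // q ∈ m} {q : Fin n × Fin p // q ∈ m} ℝ :=
    Matrix.of (fun a b : {q : Fin n × Fin p // q ∈ m} => B a.1 b.1) with hAdef
  have hAPD : A.PosDef := by
    rw [hAdef]; exact ACEAux.posDef_sub (fun q => q ∈ m) B hBPD
  have hAs : Aᵀ = A := by
    rw [← conjTranspose_eq_transpose_of_trivial]; exact hAPD.1
  have hOooEq : Ooo = Matrix.of (fun a b : {q : Fin n × Fin p // q ∉ m} => Om a.1 b.1) := by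
    ext a b; rw [hOoo]; rfl
  have hOooPD : Ooo.PosDef := by
    rw [hOooEq]; exact ACEAux.posDef_sub (fun q => q ∉ m) Om hOmPD
  have hOoodet : IsUnit Ooo.det := hOooPD.det_pos.ne'.isUnit
  set t : {q : Fin n × Fin p // q ∉ m} → ℝ :=
    Ooo⁻¹ *ᵥ (fun b : {q : Fin n × Fin p // q ∉ m} => xo b - μ b.1) with htdef
  set wst : (Fin n × Fin p) → ℝ := fun q => v zstar q - μ q with hwstdef
  -- the key gradient property of zstar
  have hOs : Om *ᵥ (ACEAux.extVec (fun q => q ∉ m) t) = wst := by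
    funext q
    rw [ACEAux.mulVec_extVec]
    by_cases hq : q ∈ m
    · have h1 : ∑ b : {q : Fin n × Fin p // q ∉ m}, Om q b.1 * t b = (Omo *ᵥ t) ⟨q, hq⟩ := by
        simp only [Matrix.mulVec, dotProduct]
        exact Finset.sum_congr rfl fun b _ => by rw [hOmo]
      rw [h1, hwstdef]
      simp only []
      rw [hv, dif_pos hq, hzstar ⟨q, hq⟩]
      ring
    · have h1 : ∑ b : {q : Fin n × Fin p // q ∉ m}, Om q b.1 * t b = (Ooo *ᵥ t) ⟨q, hq⟩ := by
        simp only [Matrix.mulVec, dotProduct]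
        exact Finset.sum_congr rfl fun b _ => by rw [hOoo]
      have h2 : Ooo *ᵥ t = fun b : {q : Fin n × Fin p // q ∉ m} => xo b - μ b.1 := by
        rw [htdef, mulVec_mulVec, mul_nonsing_inv _ hOoodet, one_mulVec]
      rw [h1, h2, hwstdef]
      simp only []
      rw [hv, dif_neg hq]
  have hgradstar : ∀ a : {q : Fin n × Fin p // q ∈ m}, (B *ᵥ wst) a.1 = 0 := by
    intro a
    have h1 : B *ᵥ wst = ACEAux.extVec (fun q => q ∉ m) t := by
      rw [← hOs, hBdef, mulVec_mulVec, nonsing_inv_mul Om hOmdet, one_mulVec]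
    rw [h1]
    simp [ACEAux.extVec, a.2]
  -- decomposition of f
  have hweq : ∀ u, (fun q => v u q - μ q)
      = wst + ACEAux.extVec (fun q => q ∈ m) (u - zstar) := by
    intro u; funext q
    rw [Pi.add_apply, hwstdef]
    simp only []
    by_cases hq : q ∈ m
    · rw [hv, hv, dif_pos hq, dif_pos hq]
      simp [ACEAux.extVec, hq]
    · rw [hv, hv, dif_neg hq, dif_neg hq]
      simp [ACEAux.extVec, hq]
  have hfz : f zstar = wst ⬝ᵥ (B *ᵥ wst) := by
    have h := hf zstar
    rw [← hwstdef] at h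
    exact h
  have hdecomp : ∀ u, f u = f zstar + (u - zstar) ⬝ᵥ (A *ᵥ (u - zstar)) := by
    intro u
    rw [hf u, hweq u, ACEAux.qf_add' hBs]
    have hc : (ACEAux.extVec (fun q => q ∈ m) (u - zstar)) ⬝ᵥ (B *ᵥ wst) = 0 := by
      rw [ACEAux.extVec_dot]
      exact Finset.sum_eq_zero fun a _ => by rw [hgradstar a, mul_zero]
    rw [hc, ACEAux.extVec_dot_mulVec, ← hAdef, ← hfz]
    ring
  -- difference-form block steps
  have hRoff : ∀ (i : Fin n) (d : {q : Fin n × Fin p // q ∈ m} → ℝ) a,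
      ¬ (a.1.1 = i) → (Rstep i (zstar + d) - zstar) a = d a := by
    intro i d a ha
    simp only [Pi.sub_apply]
    rw [(hR i (zstar + d)).1 a ha]
    simp
  have hRgrad : ∀ (i : Fin n) (d : {q : Fin n × Fin p // q ∈ m} → ℝ) a,
      (a.1.1 = i) → (A *ᵥ (Rstep i (zstar + d) - zstar)) a = 0 := by
    intro i d a ha
    exact ACEAux.grad_of_min hAPD zstar f hdecomp (fun a => a.1.1 = i) (zstar + d)
      (Rstep i (zstar + d)) (fun b hb => (hR i (zstar + d)).1 b hb)
      (fun u' hu' => (hR i (zstar + d)).2 u' hu') a ha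
  have hCoff : ∀ (j : Fin p) (d : {q : Fin n × Fin p // q ∈ m} → ℝ) a,
      ¬ (a.1.2 = j) → (Cstep j (zstar + d) - zstar) a = d a := by
    intro j d a ha
    simp only [Pi.sub_apply]
    rw [(hC j (zstar + d)).1 a ha]
    simp
  have hCgrad : ∀ (j : Fin p) (d : {q : Fin n × Fin p // q ∈ m} → ℝ) a,
      (a.1.2 = j) → (A *ᵥ (Cstep j (zstar + d) - zstar)) a = 0 := by
    intro j d a ha
    exact ACEAux.grad_of_min hAPD zstar f hdecomp (fun a => a.1.2 = j) (zstar + d)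
      (Cstep j (zstar + d)) (fun b hb => (hC j (zstar + d)).1 b hb)
      (fun u' hu' => (hC j (zstar + d)).2 u' hu') a ha
  -- the affine sweep
  have hfoldR : ∀ (l : List (Fin n)) (d : {q : Fin n × Fin p // q ∈ m} → ℝ),
      l.foldl (fun u i => Rstep i u) (zstar + d)
        = zstar + l.foldl (fun u i => Rstep i (zstar + u) - zstar) d := by
    intro l
    induction l with
    | nil => intro d; rfl
    | cons i l ih =>
      intro d
      simp only [List.foldl_cons]
      rw [show Rstep i (zstar + d) = zstar + (Rstep i (zstar + d) - zstar) by abel, ih,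
        add_sub_cancel_left]
  have hfoldC : ∀ (l : List (Fin p)) (d : {q : Fin n × Fin p // q ∈ m} → ℝ),
      l.foldl (fun u j => Cstep j u) (zstar + d)
        = zstar + l.foldl (fun u j => Cstep j (zstar + u) - zstar) d := by
    intro l
    induction l with
    | nil => intro d; rfl
    | cons j l ih =>
      intro d
      simp only [List.foldl_cons]
      rw [show Cstep j (zstar + d) = zstar + (Cstep j (zstar + d) - zstar) by abel, ih,
        add_sub_cancel_left]
  set G : ({q : Fin n × Fin p // q ∈ m} → ℝ) → ({q : Fin n × Fin p // q ∈ m} → ℝ) :=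
    fun d => (List.finRange p).foldl (fun u j => Cstep j (zstar + u) - zstar)
      ((List.finRange n).foldl (fun u i => Rstep i (zstar + u) - zstar) d) with hGdef
  have hGlin : ∀ (c : ℝ) (d d' : {q : Fin n × Fin p // q ∈ m} → ℝ),
      G (c • d + d') = c • G d + G d' := by
    intro c d d'
    rw [hGdef]
    simp only []
    rw [ACEAux.fold_lin hAPD (fun i a => a.1.1 = i) (fun i d => Rstep i (zstar + d) - zstar)
      hRoff hRgrad, ACEAux.fold_lin hAPD (fun j a => a.1.2 = j)
      (fun j d => Cstep j (zstar + d) - zstar) hCoff hCgrad]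
  have hGmono : ∀ d : {q : Fin n × Fin p // q ∈ m} → ℝ,
      (G d) ⬝ᵥ (A *ᵥ G d) ≤ d ⬝ᵥ (A *ᵥ d) := by
    intro d
    refine le_trans (ACEAux.fold_mono hAPD (fun j a => a.1.2 = j)
      (fun j d => Cstep j (zstar + d) - zstar) hCoff hCgrad _ _) ?_
    exact ACEAux.fold_mono hAPD (fun i a => a.1.1 = i)
      (fun i d => Rstep i (zstar + d) - zstar) hRoff hRgrad _ _
  have hGstrict : ∀ d : {q : Fin n × Fin p // q ∈ m} → ℝ,
      d ≠ 0 → (G d) ⬝ᵥ (A *ᵥ G d) < d ⬝ᵥ (A *ᵥ d) := by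
    intro d hd
    rcases lt_or_eq_of_le (hGmono d) with h | h
    · exact h
    · exfalso
      set e := (List.finRange n).foldl (fun u i => Rstep i (zstar + u) - zstar) d with hedef
      have h1 : (G d) ⬝ᵥ (A *ᵥ G d) ≤ e ⬝ᵥ (A *ᵥ e) :=
        ACEAux.fold_mono hAPD (fun j a => a.1.2 = j)
          (fun j d => Cstep j (zstar + d) - zstar) hCoff hCgrad _ _
      have h2 : e ⬝ᵥ (A *ᵥ e) ≤ d ⬝ᵥ (A *ᵥ d) :=
        ACEAux.fold_mono hAPD (fun i a => a.1.1 = i)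
          (fun i d => Rstep i (zstar + d) - zstar) hRoff hRgrad _ _
      have h3 : e ⬝ᵥ (A *ᵥ e) = d ⬝ᵥ (A *ᵥ d) := by
        refine le_antisymm h2 ?_
        rw [← h]
        exact h1
      obtain ⟨hfix, hblocks⟩ := ACEAux.fold_eq_case hAPD (fun i a => a.1.1 = i)
        (fun i d => Rstep i (zstar + d) - zstar) hRoff hRgrad (List.finRange n) d h3
      have hAd : A *ᵥ d = 0 :=
        funext fun a => hblocks a.1.1 (List.mem_finRange _) a rfl
      have hz0 : d ⬝ᵥ (A *ᵥ d) = 0 := by rw [hAd, dotProduct_zero]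
      have hpos := hAPD.dotProduct_mulVec_pos hd
      rw [star_trivial, hz0] at hpos
      exact lt_irrefl 0 hpos
  -- the recursion in difference form
  have hrec : ∀ k, z (k + 1) - zstar = G (z k - zstar) := by
    intro k
    rw [hz k]
    have h1 : (List.finRange n).foldl (fun u i => Rstep i u) (z k)
        = zstar + (List.finRange n).foldl (fun u i => Rstep i (zstar + u) - zstar)
          (z k - zstar) := by
      conv_lhs => rw [show z k = zstar + (z k - zstar) by abel]
      exact hfoldR _ _
    rw [h1, hfoldC _ _, hGdef]
    simp only []
    abel
  have hcore := ACEAux.core_tendsto A hAPD G hGlin hGmono hGstrict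
    (fun k => z k - zstar) hrec
  have hfinal : Tendsto (fun k => (z k - zstar) + zstar) atTop (𝓝 (0 + zstar)) :=
    hcore.add tendsto_const_nhds
  simpa using hfinal
end
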